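/- arXiv:1211.1507 — 4 statements merged into one kernel-verified Lean document; each statement's English description precedes it below -/
import Mathlib

section
/- The eigenvalues of a real symmetric N×N matrix S and the eigenvalues of its (N-1)×(N-1) principal submatrix (obtained by deleting the last row and column) interlace: if x_1 ≥ x_2 ≥ ... ≥ x_N are the eigenvalues of S and y_1 ≥ ... ≥ y_{N-1} are the eigenvalues of the submatrix, then x_i ≥ y_i ≥ x_{i+1} for all 1 ≤ i ≤ N-1. -/
open Matrix Polynomial Finset

namespace CauchyInterlacingAux

lemma charpoly_conj_aux {n : ℕ} (U A V : Matrix (Fin n) (Fin n) ℝ) (h1 : U * V = 1) :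
    (U * A * V).charpoly = A.charpoly := by
  have fmul : ∀ P Q : Matrix (Fin n) (Fin n) ℝ, (P * Q).map (C : ℝ → ℝ[X]) = P.map C * Q.map C :=
    fun P Q => Matrix.map_mul
  have fone : (1 : Matrix (Fin n) (Fin n) ℝ).map (C : ℝ → ℝ[X]) = 1 := by
    ext i j; by_cases h : i = j <;> simp [h, Matrix.one_apply]
  have hcent : ∀ M : Matrix (Fin n) (Fin n) ℝ[X], M * Matrix.scalar (Fin n) (X : ℝ[X])
      = Matrix.scalar (Fin n) (X : ℝ[X]) * M :=
    fun M => ((Matrix.scalar_commute (X : ℝ[X]) (fun r => mul_comm _ _) M).symm)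
  have key : charmatrix (U * A * V) = U.map C * charmatrix A * V.map C := by
    rw [charmatrix, charmatrix, mul_sub, sub_mul]
    congr 1
    · rw [mul_assoc, ← hcent, ← mul_assoc, ← fmul, h1, fone, one_mul]
    · rw [RingHom.mapMatrix_apply, RingHom.mapMatrix_apply, ← fmul, ← fmul]
  rw [Matrix.charpoly, Matrix.charpoly, key, det_mul, det_mul, mul_comm (det (Matrix.map U C)),
    mul_assoc, ← det_mul, ← fmul, h1, fone, det_one, mul_one]

lemma eig_data (n : ℕ) (A : Matrix (Fin n) (Fin n) ℝ) (hA : A.IsHermitian) :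
    ∃ (lam : Fin n → ℝ) (u : Fin n → (Fin n → ℝ)),
      (∀ j, A *ᵥ u j = lam j • u j) ∧
      (∀ j k, u j ⬝ᵥ u k = if j = k then 1 else 0) ∧
      A.charpoly.roots = Finset.univ.val.map lam := by
  refine ⟨hA.eigenvalues, fun j => ⇑(hA.eigenvectorBasis j), fun j => hA.mulVec_eigenvectorBasis j,
    ?_, ?_⟩
  · intro j k
    have := (orthonormal_iff_ite.mp hA.eigenvectorBasis.orthonormal) j k
    simpa [inner, dotProduct, mul_comm] using this
  · have hdiag : (diagonal (RCLike.ofReal ∘ hA.eigenvalues) : Matrix (Fin n) (Fin n) ℝ).charpoly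
        = A.charpoly := by
      conv_rhs => rw [hA.spectral_theorem]
      rw [Unitary.conjStarAlgAut_apply, charpoly_conj_aux]
      exact (Matrix.mem_unitaryGroup_iff).mp (hA.eigenvectorUnitary).2
    have h2 : (diagonal (RCLike.ofReal ∘ hA.eigenvalues) : Matrix (Fin n) (Fin n) ℝ).charpoly
        = ∏ i : Fin n, (X - C (hA.eigenvalues i)) := by
      rw [Matrix.charpoly_of_upperTriangular _ (Matrix.blockTriangular_diagonal _)]
      simp
    rw [← hdiag, h2]
    have h3 : ∏ i : Fin n, (X - C (hA.eigenvalues i))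
        = ((Finset.univ.val.map hA.eigenvalues).map fun a => X - C a).prod := by
      rw [Multiset.map_map]; rfl
    rw [h3, Polynomial.roots_multiset_prod_X_sub_C]

lemma sum_dot {n : ℕ} {ι : Type*} (s : Finset ι) (f : ι → (Fin n → ℝ)) (w : Fin n → ℝ) :
    (∑ i ∈ s, f i) ⬝ᵥ w = ∑ i ∈ s, f i ⬝ᵥ w := by
  simp only [dotProduct, Finset.sum_apply, Finset.sum_mul]
  rw [Finset.sum_comm]

lemma dot_sum {n : ℕ} {ι : Type*} (s : Finset ι) (f : ι → (Fin n → ℝ)) (w : Fin n → ℝ) :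
    w ⬝ᵥ (∑ i ∈ s, f i) = ∑ i ∈ s, w ⬝ᵥ f i := by
  simp only [dotProduct, Finset.sum_apply, Finset.mul_sum]
  rw [Finset.sum_comm]

lemma span_data {n : ℕ} (A : Matrix (Fin n) (Fin n) ℝ) (lam : Fin n → ℝ) (u : Fin n → (Fin n → ℝ))
    (heig : ∀ j, A *ᵥ u j = lam j • u j) (horth : ∀ j k, u j ⬝ᵥ u k = if j = k then 1 else 0)
    (T : Finset (Fin n)) :
    ∃ V : Submodule ℝ (Fin n → ℝ), Module.finrank ℝ V = T.card ∧
      ∀ w ∈ V,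
        (∀ b : ℝ, (∀ j ∈ T, b ≤ lam j) → b * (w ⬝ᵥ w) ≤ w ⬝ᵥ (A *ᵥ w)) ∧
        (∀ B : ℝ, (∀ j ∈ T, lam j ≤ B) → w ⬝ᵥ (A *ᵥ w) ≤ B * (w ⬝ᵥ w)) := by
  classical
  set f : T → (Fin n → ℝ) := fun j => u j.1 with hf
  have horthf : ∀ j k : T, f j ⬝ᵥ f k = if j = k then 1 else 0 := by
    intro j k
    rw [horth]
    by_cases h : j = k
    · simp [h]
    · rw [if_neg h, if_neg (fun hh => h (Subtype.ext hh))]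
  have hli : LinearIndependent ℝ f := by
    rw [Fintype.linearIndependent_iff]
    intro g hg k
    have := congrArg (fun v => v ⬝ᵥ f k) hg
    simp only [sum_dot, smul_dotProduct, horthf, zero_dotProduct] at this
    simpa [Finset.sum_ite_eq', smul_eq_mul] using this
  refine ⟨Submodule.span ℝ (Set.range f), by
      rw [finrank_span_eq_card hli, Fintype.card_coe], ?_⟩
  intro w hw
  obtain ⟨c, rfl⟩ := (Submodule.mem_span_range_iff_exists_fun ℝ).mp hw
  have hdot : (∑ i : T, c i • f i) ⬝ᵥ (∑ i : T, c i • f i) = ∑ i : T, (c i)^2 := by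
    rw [sum_dot]
    refine Finset.sum_congr rfl fun i _ => ?_
    rw [smul_dotProduct, dot_sum]
    simp only [dotProduct_smul, horthf, smul_eq_mul]
    simp [Finset.sum_ite_eq', pow_two, mul_comm]
  have hmul : A *ᵥ (∑ i : T, c i • f i) = ∑ i : T, (c i * lam i.1) • f i := by
    rw [show (A *ᵥ ∑ i : T, c i • f i) = ∑ i : T, A *ᵥ (c i • f i) from
      map_sum (Matrix.mulVecLin A) _ _]
    refine Finset.sum_congr rfl fun i _ => ?_
    rw [Matrix.mulVec_smul, heig, smul_smul]
  have hquad : (∑ i : T, c i • f i) ⬝ᵥ (A *ᵥ (∑ i : T, c i • f i))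
      = ∑ i : T, lam i.1 * (c i)^2 := by
    rw [hmul, dot_sum]
    refine Finset.sum_congr rfl fun i _ => ?_
    rw [dotProduct_smul, sum_dot]
    simp only [smul_dotProduct, horthf, smul_eq_mul]
    rw [Finset.sum_eq_single i (fun b _ hb => by simp [hb]) (by simp)]
    simp [pow_two]; ring
  constructor
  · intro b hb
    rw [hdot, hquad, Finset.mul_sum]
    exact Finset.sum_le_sum fun i _ =>
      mul_le_mul_of_nonneg_right (hb i.1 i.2) (sq_nonneg _)
  · intro B hB
    rw [hdot, hquad, Finset.mul_sum]
    exact Finset.sum_le_sum fun i _ =>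
      mul_le_mul_of_nonneg_right (hB i.1 i.2) (sq_nonneg _)

lemma count_ge {n : ℕ} (x lam : Fin n → ℝ) (hx : Antitone x)
    (h : Finset.univ.val.map lam = Finset.univ.val.map x) (i : Fin n) :
    i.val + 1 ≤ (Finset.univ.filter (fun j => x i ≤ lam j)).card := by
  have h1 : (Finset.univ.filter (fun j => x i ≤ lam j)).card
      = Multiset.countP (fun a => x i ≤ a) (Finset.univ.val.map lam) := by
    rw [Multiset.countP_map]; rfl
  have h2 : Multiset.countP (fun a => x i ≤ a) (Finset.univ.val.map x)
      = (Finset.univ.filter (fun j => x i ≤ x j)).card := by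
    rw [Multiset.countP_map]; rfl
  rw [h1, h, h2]
  calc i.val + 1 = (Finset.Iic i).card := (Fin.card_Iic i).symm
    _ ≤ _ := Finset.card_le_card (fun j hj => by
        simp only [Finset.mem_Iic] at hj
        simp only [Finset.mem_filter, Finset.mem_univ, true_and]
        exact hx hj)

lemma count_le {n : ℕ} (x lam : Fin n → ℝ) (hx : Antitone x)
    (h : Finset.univ.val.map lam = Finset.univ.val.map x) (i : Fin n) :
    n - i.val ≤ (Finset.univ.filter (fun j => lam j ≤ x i)).card := by
  have h1 : (Finset.univ.filter (fun j => lam j ≤ x i)).card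
      = Multiset.countP (fun a => a ≤ x i) (Finset.univ.val.map lam) := by
    rw [Multiset.countP_map]; rfl
  have h2 : Multiset.countP (fun a => a ≤ x i) (Finset.univ.val.map x)
      = (Finset.univ.filter (fun j => x j ≤ x i)).card := by
    rw [Multiset.countP_map]; rfl
  rw [h1, h, h2]
  calc n - i.val = (Finset.Ici i).card := (Fin.card_Ici i).symm
    _ ≤ _ := Finset.card_le_card (fun j hj => by
        simp only [Finset.mem_Ici] at hj
        simp only [Finset.mem_filter, Finset.mem_univ, true_and]
        exact hx hj)

lemma exists_ne_zero_inf {n : ℕ} (V₁ V₂ : Submodule ℝ (Fin n → ℝ))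
    (h : n < Module.finrank ℝ V₁ + Module.finrank ℝ V₂) :
    ∃ w : Fin n → ℝ, w ≠ 0 ∧ w ∈ V₁ ∧ w ∈ V₂ := by
  have hsup : Module.finrank ℝ (V₁ ⊔ V₂ : Submodule ℝ (Fin n → ℝ)) ≤ n := by
    simpa using Submodule.finrank_le (V₁ ⊔ V₂)
  have heq := Submodule.finrank_sup_add_finrank_inf_eq V₁ V₂
  have hpos : 0 < Module.finrank ℝ (V₁ ⊓ V₂ : Submodule ℝ (Fin n → ℝ)) := by omega
  obtain ⟨⟨w, hw⟩, hne⟩ := Module.finrank_pos_iff_exists_ne_zero.mp hpos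
  refine ⟨w, ?_, hw.1, hw.2⟩
  intro h0
  exact hne (by simp [Submodule.mk_eq_zero, h0])

noncomputable def ext0 (M : ℕ) : (Fin M → ℝ) →ₗ[ℝ] (Fin (M+1) → ℝ) where
  toFun z := Fin.snoc z 0
  map_add' a b := by
    ext i
    refine Fin.lastCases ?_ (fun j => ?_) i <;> simp
  map_smul' c a := by
    ext i
    refine Fin.lastCases ?_ (fun j => ?_) i <;> simp

lemma ext0_inj (M : ℕ) : Function.Injective (ext0 M) := by
  intro a b h
  ext i
  have := congrFun h (Fin.castSucc i)
  simpa [ext0] using this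

lemma ext0_dot (M : ℕ) (a b : Fin M → ℝ) : (ext0 M a) ⬝ᵥ (ext0 M b) = a ⬝ᵥ b := by
  simp [ext0, dotProduct, Fin.sum_univ_castSucc]

lemma ext0_quad (M : ℕ) (S : Matrix (Fin (M+1)) (Fin (M+1)) ℝ) (a b : Fin M → ℝ) :
    (ext0 M a) ⬝ᵥ (S *ᵥ ext0 M b)
      = a ⬝ᵥ ((S.submatrix Fin.castSucc Fin.castSucc) *ᵥ b) := by
  simp [ext0, dotProduct, mulVec, Fin.sum_univ_castSucc]

end CauchyInterlacingAux

open CauchyInterlacingAux in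
/-- **Cauchy interlacing theorem.** The eigenvalues of a real symmetric `N × N` matrix `S`
(listed in decreasing order with multiplicity, as the roots of its characteristic polynomial)
and the eigenvalues of its principal `(N-1) × (N-1)` submatrix obtained by deleting the last
row and column interlace: `x i ≥ y i ≥ x (i+1)` for all `1 ≤ i ≤ N-1`. -/
theorem cauchy_interlacing
    (N : ℕ) (hN : 2 ≤ N)
    (S : Matrix (Fin N) (Fin N) ℝ) (hS : S.IsSymm)
    (x : Fin N → ℝ) (y : Fin (N - 1) → ℝ)
    (hxdec : Antitone x) (hydec : Antitone y)
    (hx : S.charpoly.roots = (Finset.univ.val.map x))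
    (hy : ((S.submatrix (fun i : Fin (N - 1) => Fin.castLE (Nat.sub_le N 1) i)
        (fun j : Fin (N - 1) => Fin.castLE (Nat.sub_le N 1) j)).charpoly).roots
        = (Finset.univ.val.map y)) :
    ∀ i : Fin (N - 1),
      x (Fin.castLE (Nat.sub_le N 1) i) ≥ y i ∧
      y i ≥ x ⟨i + 1, by omega⟩ := by
  obtain ⟨M, rfl⟩ : ∃ M, N = M + 1 := ⟨N - 1, by omega⟩
  have hSH : S.IsHermitian := by
    ext i j; simp [Matrix.conjTranspose_apply, hS.apply]
  set Sh : Matrix (Fin M) (Fin M) ℝ := S.submatrix Fin.castSucc Fin.castSucc with hSh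
  have hShH : Sh.IsHermitian := by
    ext i j; simp [hSh, Matrix.conjTranspose_apply, Matrix.submatrix_apply, hS.apply]
  obtain ⟨lam, u, heig, horth, hroots⟩ := eig_data _ S hSH
  obtain ⟨mu, v, heig', horth', hroots'⟩ := eig_data _ Sh hShH
  have hlx : Finset.univ.val.map lam = Finset.univ.val.map x := by rw [← hroots, hx]
  have hmy : Finset.univ.val.map mu = Finset.univ.val.map y := by
    rw [← hroots']
    exact hy
  intro i
  have hilt : (i : ℕ) < M := i.isLt
  have dotself_nonneg : ∀ (z : Fin M → ℝ), 0 ≤ z ⬝ᵥ z :=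
    fun z => Finset.sum_nonneg fun k _ => mul_self_nonneg _
  constructor
  · -- x (castSucc i) ≥ y i
    set ci : Fin (M+1) := Fin.castSucc i with hci
    obtain ⟨U, hUrank, hUprop⟩ := span_data S lam u heig horth
      (Finset.univ.filter (fun j => lam j ≤ x ci))
    obtain ⟨V, hVrank, hVprop⟩ := span_data Sh mu v heig' horth'
      (Finset.univ.filter (fun j => y i ≤ mu j))
    have hUge : (M + 1) - (i : ℕ) ≤ Module.finrank ℝ U := by
      rw [hUrank]; exact count_le x lam hxdec hlx ci
    have hVge : (i : ℕ) + 1 ≤ Module.finrank ℝ V := by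
      rw [hVrank]; exact count_ge y mu hydec hmy i
    set V' : Submodule ℝ (Fin (M+1) → ℝ) := Submodule.map (ext0 M) V with hV'
    have hV'rank : Module.finrank ℝ V' = Module.finrank ℝ V :=
      ((Submodule.equivMapOfInjective _ (ext0_inj M) V).finrank_eq).symm
    obtain ⟨w, hw0, hwU, hwV'⟩ := exists_ne_zero_inf U V' (by omega)
    obtain ⟨z, hzV, rfl⟩ := Submodule.mem_map.mp hwV'
    have hz0 : z ≠ 0 := fun h => hw0 (by rw [h, map_zero])
    have hzpos : 0 < z ⬝ᵥ z :=
      lt_of_le_of_ne (dotself_nonneg z) (fun h => hz0 (dotProduct_self_eq_zero.mp h.symm))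
    have h1 : (ext0 M z) ⬝ᵥ (S *ᵥ ext0 M z) ≤ x ci * ((ext0 M z) ⬝ᵥ (ext0 M z)) :=
      (hUprop _ hwU).2 _ (fun j hj => (Finset.mem_filter.mp hj).2)
    have h2 : y i * (z ⬝ᵥ z) ≤ z ⬝ᵥ (Sh *ᵥ z) :=
      (hVprop z hzV).1 _ (fun j hj => (Finset.mem_filter.mp hj).2)
    rw [ext0_quad, ext0_dot, ← hSh] at h1
    have : y i * (z ⬝ᵥ z) ≤ x ci * (z ⬝ᵥ z) := le_trans h2 h1
    exact le_of_mul_le_mul_right this hzpos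
  · -- y i ≥ x ⟨i+1, _⟩
    set ci : Fin (M+1) := ⟨(i : ℕ) + 1, by omega⟩ with hci
    obtain ⟨U, hUrank, hUprop⟩ := span_data S lam u heig horth
      (Finset.univ.filter (fun j => x ci ≤ lam j))
    obtain ⟨V, hVrank, hVprop⟩ := span_data Sh mu v heig' horth'
      (Finset.univ.filter (fun j => mu j ≤ y i))
    have hUge : (i : ℕ) + 2 ≤ Module.finrank ℝ U := by
      rw [hUrank]
      have := count_ge x lam hxdec hlx ci
      simp [hci] at this ⊢; omega
    have hVge : M - (i : ℕ) ≤ Module.finrank ℝ V := by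
      rw [hVrank]; exact count_le y mu hydec hmy i
    set V' : Submodule ℝ (Fin (M+1) → ℝ) := Submodule.map (ext0 M) V with hV'
    have hV'rank : Module.finrank ℝ V' = Module.finrank ℝ V :=
      ((Submodule.equivMapOfInjective _ (ext0_inj M) V).finrank_eq).symm
    obtain ⟨w, hw0, hwU, hwV'⟩ := exists_ne_zero_inf U V' (by omega)
    obtain ⟨z, hzV, rfl⟩ := Submodule.mem_map.mp hwV'
    have hz0 : z ≠ 0 := fun h => hw0 (by rw [h, map_zero])
    have hzpos : 0 < z ⬝ᵥ z :=
      lt_of_le_of_ne (dotself_nonneg z) (fun h => hz0 (dotProduct_self_eq_zero.mp h.symm))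
    have h1 : x ci * ((ext0 M z) ⬝ᵥ (ext0 M z)) ≤ (ext0 M z) ⬝ᵥ (S *ᵥ ext0 M z) :=
      (hUprop _ hwU).1 _ (fun j hj => (Finset.mem_filter.mp hj).2)
    have h2 : z ⬝ᵥ (Sh *ᵥ z) ≤ y i * (z ⬝ᵥ z) :=
      (hVprop z hzV).2 _ (fun j hj => (Finset.mem_filter.mp hj).2)
    rw [ext0_quad, ext0_dot, ← hSh] at h1
    have : x ci * (z ⬝ᵥ z) ≤ y i * (z ⬝ᵥ z) := le_trans h1 h2
    exact le_of_mul_le_mul_right this hzpos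
end

section
/- With d_r and e_r as the weighted Dyck path counts (weights α on down-steps from odd height for d, and β for e, respectively), one has β·d_r = α·e_r for all r ≥ 1, and hence the recursion d_r = β Σ_{j=2}^r d_{r−j} d_{j−1} + α d_{r−1}. -/
/-- The height of the lattice path with `±1` steps `f` after the first `i` steps
(`true` = up-step, `false` = down-step). -/
def pathHeight (r : ℕ) (f : Fin r → Bool) (i : ℕ) : ℤ :=
  ∑ j ∈ Finset.univ.filter (fun j : Fin r => (j : ℕ) < i),
    (if f j then (1 : ℤ) else -1)

/-- A Dyck path of length `2k`, encoded by its step sequence. -/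
def IsDyckPath (k : ℕ) (f : Fin (2 * k) → Bool) : Prop :=
  pathHeight (2 * k) f (2 * k) = 0 ∧ ∀ i : Fin (2 * k + 1), 0 ≤ pathHeight (2 * k) f i

instance (k : ℕ) : DecidablePred (IsDyckPath k) := fun f => by
  unfold IsDyckPath; infer_instance

/-- `a(D)`: the number of down-steps of the Dyck path `D` starting from an odd height. -/
def aCount (k : ℕ) (f : Fin (2 * k) → Bool) : ℕ :=
  (Finset.univ.filter
    (fun j : Fin (2 * k) => f j = false ∧ Odd (pathHeight (2 * k) f (j : ℕ)))).card

/-- `d_r(α,β) = Σ_D β^{b(D)} α^{a(D)}`, summed over Dyck paths `D` of length `2r`,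
where `b(D) = r − a(D)`. -/
def dWeight {R : Type*} [CommRing R] (α β : R) (r : ℕ) : R :=
  ∑ f ∈ Finset.univ.filter (IsDyckPath r),
    β ^ (r - aCount r f) * α ^ (aCount r f)

/-- `e_r(α,β) = Σ_D β^{a(D)} α^{b(D)}`, summed over Dyck paths `D` of length `2r`. -/
def eWeight {R : Type*} [CommRing R] (α β : R) (r : ℕ) : R :=
  ∑ f ∈ Finset.univ.filter (IsDyckPath r),
    β ^ (aCount r f) * α ^ (r - aCount r f)




/-- Height function at ℕ level. -/
def hgt (g : ℕ → Bool) : ℕ → ℤ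
  | 0 => 0
  | i+1 => hgt g i + (if g i then 1 else -1)

/-- extension of a Fin-function to ℕ. -/
def ext (n : ℕ) (f : Fin n → Bool) (t : ℕ) : Bool :=
  if h : t < n then f ⟨t, h⟩ else true

lemma pathHeight_succ (n : ℕ) (f : Fin n → Bool) (i : ℕ) :
    pathHeight n f (i+1)
      = pathHeight n f i + (if h : i < n then (if f ⟨i,h⟩ then (1:ℤ) else -1) else 0) := by
  unfold pathHeight
  by_cases h : i < n
  · rw [dif_pos h]
    have : Finset.univ.filter (fun j : Fin n => (j : ℕ) < i + 1)
        = insert ⟨i, h⟩ (Finset.univ.filter (fun j : Fin n => (j : ℕ) < i)) := by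
      ext j
      simp only [Finset.mem_filter, Finset.mem_univ, true_and, Finset.mem_insert]
      constructor
      · intro hj
        rcases Nat.lt_succ_iff_lt_or_eq.mp hj with h'|h'
        · exact Or.inr h'
        · exact Or.inl (Fin.ext h')
      · rintro (rfl|hj)
        · exact Nat.lt_succ_self _
        · exact Nat.lt_succ_of_lt hj
    rw [this, Finset.sum_insert (by simp)]
    ring
  · rw [dif_neg h]
    have : ∀ m, Finset.univ.filter (fun j : Fin n => (j : ℕ) < m)
        = Finset.univ.filter (fun j : Fin n => (j : ℕ) < i) ∨ True := fun _ => Or.inr trivial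
    have he : Finset.univ.filter (fun j : Fin n => (j : ℕ) < i + 1)
        = Finset.univ.filter (fun j : Fin n => (j : ℕ) < i) := by
      ext j
      simp only [Finset.mem_filter, Finset.mem_univ, true_and]
      have hj : (j : ℕ) < n := j.2
      have hj' : (j : ℕ) < i := lt_of_lt_of_le hj (le_of_not_gt h)
      simp [hj', Nat.lt_succ_of_lt hj']
    rw [he]; ring

lemma pathHeight_eq_hgt (n : ℕ) (f : Fin n → Bool) (i : ℕ) (hi : i ≤ n) :
    pathHeight n f i = hgt (ext n f) i := by
  induction i with
  | zero =>
      unfold pathHeight hgt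
      simp
  | succ i ih =>
      have hi' : i < n := hi
      rw [pathHeight_succ, hgt, ih (le_of_lt hi'), dif_pos hi']
      unfold ext
      rw [dif_pos hi']




/-- ℕ-level Dyck predicate. -/
def DyN (k : ℕ) (g : ℕ → Bool) : Prop :=
  hgt g (2*k) = 0 ∧ ∀ i ≤ 2*k, 0 ≤ hgt g i

/-- ℕ-level `a`-count: down-steps at odd index. -/
def aN (k : ℕ) (g : ℕ → Bool) : ℕ :=
  ((Finset.range (2*k)).filter (fun t => g t = false ∧ Odd t)).card

/-- number of down steps. -/
def fN (k : ℕ) (g : ℕ → Bool) : ℕ :=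
  ((Finset.range (2*k)).filter (fun t => g t = false)).card

lemma hgt_congr (g g' : ℕ → Bool) (i : ℕ) (h : ∀ t < i, g t = g' t) :
    hgt g i = hgt g' i := by
  induction i with
  | zero => rfl
  | succ i ih =>
      rw [hgt, hgt, ih (fun t ht => h t (Nat.lt_succ_of_lt ht)), h i (Nat.lt_succ_self _)]

lemma hgt_parity (g : ℕ → Bool) (i : ℕ) : Odd (hgt g i) ↔ Odd i := by
  induction i with
  | zero => simp [hgt]
  | succ i ih =>
      rw [hgt]
      by_cases h : g i <;> simp [h, Int.odd_add, ih, Nat.odd_add_one, Int.not_odd_iff_even] <;>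
          simp [← Int.not_odd_iff_even, ← Nat.not_odd_iff_even, ih]

lemma isDyckPath_iff (k : ℕ) (f : Fin (2*k) → Bool) :
    IsDyckPath k f ↔ DyN k (ext (2*k) f) := by
  unfold IsDyckPath DyN
  constructor
  · rintro ⟨h1, h2⟩
    refine ⟨by rw [← pathHeight_eq_hgt _ _ _ le_rfl]; exact h1, fun i hi => ?_⟩
    rw [← pathHeight_eq_hgt _ _ _ hi]
    exact h2 ⟨i, Nat.lt_succ_of_le hi⟩
  · rintro ⟨h1, h2⟩
    refine ⟨by rw [pathHeight_eq_hgt _ _ _ le_rfl]; exact h1, fun i => ?_⟩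
    have hi : (i : ℕ) ≤ 2*k := Nat.lt_succ_iff.mp i.2
    rw [pathHeight_eq_hgt _ _ _ hi]
    exact h2 i hi

lemma aCount_eq_aN (k : ℕ) (f : Fin (2*k) → Bool) :
    aCount k f = aN k (ext (2*k) f) := by
  unfold aCount aN
  refine Finset.card_nbij (fun j => (j : ℕ)) ?_ ?_ ?_
  · intro j hj
    simp only [Finset.mem_coe, Finset.mem_filter, Finset.mem_univ, true_and] at hj
    simp only [Finset.mem_coe, Finset.mem_filter, Finset.mem_range]
    have hj2 : (j:ℕ) < 2*k := j.2
    have hpar : Odd (pathHeight (2*k) f (j:ℕ)) ↔ Odd (j:ℕ) := by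
      rw [pathHeight_eq_hgt _ _ _ (le_of_lt hj2)]; exact hgt_parity _ _
    refine ⟨hj2, ?_, hpar.mp hj.2⟩
    unfold ext; rw [dif_pos hj2]; exact hj.1
  · intro a ha b hb hab
    exact Fin.ext hab
  · intro t ht
    simp only [Finset.coe_filter, Set.mem_setOf_eq, Finset.mem_range, Finset.mem_univ,
      true_and] at ht
    obtain ⟨ht1, ht2, ht3⟩ := ht
    refine ⟨⟨t, ht1⟩, ?_, rfl⟩
    simp only [Finset.coe_filter, Set.mem_setOf_eq, Finset.mem_univ, true_and]
    unfold ext at ht2; rw [dif_pos ht1] at ht2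
    refine ⟨ht2, ?_⟩
    rw [pathHeight_eq_hgt _ _ _ (le_of_lt ht1)]
    exact (hgt_parity _ _).mpr ht3

/-- `b`-count: down-steps at even index. -/
def bN (k : ℕ) (g : ℕ → Bool) : ℕ :=
  ((Finset.range (2*k)).filter (fun t => g t = false ∧ ¬ Odd t)).card

def fNc (k : ℕ) (g : ℕ → Bool) : ℕ :=
  ((Finset.range (2*k)).filter (fun t => g t = false)).card

lemma hgt_eq_sub (g : ℕ → Bool) (i : ℕ) :
    hgt g i = (i : ℤ) - 2 * ((Finset.range i).filter (fun t => g t = false)).card := by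
  induction i with
  | zero => simp [hgt]
  | succ i ih =>
      rw [hgt, ih, Finset.range_add_one, Finset.filter_insert]
      by_cases h : g i
      · simp [h]; ring
      · have h' : g i = false := by simp [h]
        rw [if_pos h', Finset.card_insert_of_notMem (by simp)]
        simp [h']; ring

lemma fNc_eq (k : ℕ) (g : ℕ → Bool) (h : hgt g (2*k) = 0) : fNc k g = k := by
  have := hgt_eq_sub g (2*k)
  rw [h] at this
  unfold fNc
  omega

lemma aN_add_bN (k : ℕ) (g : ℕ → Bool) (h : hgt g (2*k) = 0) :
    aN k g + bN k g = k := by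
  have key : aN k g + bN k g = fNc k g := by
    unfold aN bN fNc
    rw [Finset.card_filter, Finset.card_filter, Finset.card_filter, ← Finset.sum_add_distrib]
    refine Finset.sum_congr rfl fun t _ => ?_
    by_cases h1 : g t = false <;> by_cases h2 : Odd t <;> simp [h1, h2]
  rw [key, fNc_eq k g h]

/-- shift lemma. -/
lemma hgt_add (g : ℕ → Bool) (m t : ℕ) :
    hgt g (m + t) = hgt g m + hgt (fun s => g (m + s)) t := by
  induction t with
  | zero => simp [hgt]
  | succ t ih => rw [← Nat.add_assoc, hgt, ih, hgt]; ring

/-- gluing at ℕ level: up-step, path `a` (length `2(j-1)`), down-step, path `b`. -/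
def glueN (j : ℕ) (a b : ℕ → Bool) (t : ℕ) : Bool :=
  if t = 0 then true
  else if t < 2*j - 1 then a (t-1)
  else if t = 2*j - 1 then false
  else b (t - 2*j)

section GlueLemmas
variable (j : ℕ) (a b : ℕ → Bool) (hj1 : 1 ≤ j)

lemma glueN_zero : glueN j a b 0 = true := rfl

lemma glueN_mid (t : ℕ) (h1 : 1 ≤ t) (h2 : t < 2*j - 1) : glueN j a b t = a (t-1) := by
  unfold glueN; rw [if_neg (by omega), if_pos h2]

include hj1

lemma glueN_ret : glueN j a b (2*j-1) = false := by
  unfold glueN; rw [if_neg (by omega), if_neg (by omega), if_pos rfl]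

lemma glueN_right (s : ℕ) : glueN j a b (2*j + s) = b s := by
  unfold glueN
  rw [if_neg (by omega), if_neg (by omega), if_neg (by omega)]
  congr 1; omega

lemma hgt_glueN_left (t : ℕ) (ht : t ≤ 2*(j-1)) :
    hgt (glueN j a b) (t+1) = 1 + hgt a t := by
  induction t with
  | zero => simp [hgt, glueN_zero]
  | succ t ih =>
      rw [show t+1+1 = (t+1)+1 from rfl, hgt, ih (by omega), hgt,
        glueN_mid j a b (t+1) (by omega) (by omega)]
      simp only [Nat.add_sub_cancel]
      ring

lemma hgt_glueN_ret : hgt (glueN j a b) (2*j) = hgt a (2*(j-1)) := by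
  have h1 : 2*j = (2*j-1) + 1 := by omega
  have h2 : 2*j - 1 = 2*(j-1) + 1 := by omega
  rw [h1, hgt, h2, hgt_glueN_left j a b hj1 (2*(j-1)) le_rfl, ← h2,
    glueN_ret j a b hj1]
  simp

lemma hgt_glueN_right (t : ℕ) :
    hgt (glueN j a b) (2*j + t) = hgt a (2*(j-1)) + hgt b t := by
  rw [hgt_add, hgt_glueN_ret j a b hj1]
  congr 1
  exact hgt_congr _ _ t (fun s _ => glueN_right j a b hj1 s)

end GlueLemmas

lemma aN_congr (k : ℕ) (g g' : ℕ → Bool) (h : ∀ t < 2*k, g t = g' t) :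
    aN k g = aN k g' := by
  unfold aN
  congr 1
  refine Finset.filter_congr fun t ht => ?_
  rw [Finset.mem_range] at ht
  rw [h t ht]

lemma DyN_congr (k : ℕ) (g g' : ℕ → Bool) (h : ∀ t < 2*k, g t = g' t) (hD : DyN k g) :
    DyN k g' := by
  obtain ⟨h1, h2⟩ := hD
  constructor
  · rw [← hgt_congr g g' (2*k) (fun t ht => h t ht)]; exact h1
  · intro i hi
    rw [← hgt_congr g g' i (fun t ht => h t (lt_of_lt_of_le ht hi))]
    exact h2 i hi

lemma sum_range_glue (r j : ℕ) (hj1 : 1 ≤ j) (hjr : j ≤ r) (F : ℕ → ℕ) :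
    ∑ t ∈ Finset.range (2*r), F t
      = F 0 + (∑ s ∈ Finset.range (2*(j-1)), F (1+s)) + F (2*j-1)
        + ∑ s ∈ Finset.range (2*(r-j)), F (2*j+s) := by
  have h1 : ∑ t ∈ Finset.Ico 0 1, F t = F 0 := by simp
  have h2 : ∑ t ∈ Finset.Ico 1 (2*j-1), F t = ∑ s ∈ Finset.range (2*(j-1)), F (1+s) := by
    rw [Finset.sum_Ico_eq_sum_range]
    exact Finset.sum_congr (by congr 1; omega) (fun x _ => rfl)
  have h3 : ∑ t ∈ Finset.Ico (2*j-1) (2*j), F t = F (2*j-1) := by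
    have hs : Finset.Ico (2*j-1) (2*j) = {2*j-1} := by
      ext x; simp only [Finset.mem_Ico, Finset.mem_singleton]; omega
    rw [hs, Finset.sum_singleton]
  have h4 : ∑ t ∈ Finset.Ico (2*j) (2*r), F t = ∑ s ∈ Finset.range (2*(r-j)), F (2*j+s) := by
    rw [Finset.sum_Ico_eq_sum_range]
    exact Finset.sum_congr (by congr 1; omega) (fun x _ => rfl)
  rw [← h1, ← h2, ← h3, ← h4, Finset.range_eq_Ico,
    Finset.sum_Ico_consecutive F (by omega : (0:ℕ) ≤ 1) (by omega : 1 ≤ 2*j-1),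
    Finset.sum_Ico_consecutive F (by omega : (0:ℕ) ≤ 2*j-1) (by omega : 2*j-1 ≤ 2*j),
    Finset.sum_Ico_consecutive F (by omega : (0:ℕ) ≤ 2*j) (by omega : 2*j ≤ 2*r)]

lemma aN_glueN (r j : ℕ) (hj1 : 1 ≤ j) (hjr : j ≤ r) (a b : ℕ → Bool) :
    aN r (glueN j a b) = bN (j-1) a + 1 + aN (r-j) b := by
  unfold aN bN
  rw [Finset.card_filter, Finset.card_filter, Finset.card_filter,
    sum_range_glue r j hj1 hjr]
  have e0 : (if glueN j a b 0 = false ∧ Odd 0 then 1 else 0) = 0 := by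
    simp [glueN_zero]
  have e1 : ∀ s ∈ Finset.range (2*(j-1)),
      (if glueN j a b (1+s) = false ∧ Odd (1+s) then 1 else 0)
        = (if a s = false ∧ ¬ Odd s then 1 else 0) := by
    intro s hs
    rw [Finset.mem_range] at hs
    have hg : glueN j a b (1+s) = a s := by
      rw [glueN_mid j a b (1+s) (by omega) (by omega)]
      congr 1; omega
    have hodd : Odd (1+s) ↔ ¬ Odd s := by
      simp only [Nat.odd_iff]; omega
    rw [hg]
    simp only [hodd]
  have e2 : (if glueN j a b (2*j-1) = false ∧ Odd (2*j-1) then 1 else 0) = 1 := by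
    have : Odd (2*j-1) := by simp only [Nat.odd_iff]; omega
    simp [glueN_ret j a b hj1, this]
  have e3 : ∀ s ∈ Finset.range (2*(r-j)),
      (if glueN j a b (2*j+s) = false ∧ Odd (2*j+s) then 1 else 0)
        = (if b s = false ∧ Odd s then 1 else 0) := by
    intro s hs
    have hodd : Odd (2*j+s) ↔ Odd s := by simp only [Nat.odd_iff]; omega
    rw [glueN_right j a b hj1 s]
    simp only [hodd]
  rw [e0, e2, Finset.sum_congr rfl e1, Finset.sum_congr rfl e3]
  ring

lemma bN_glueN (r j : ℕ) (hj1 : 1 ≤ j) (hjr : j ≤ r) (a b : ℕ → Bool) :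
    bN r (glueN j a b) = aN (j-1) a + bN (r-j) b := by
  unfold aN bN
  rw [Finset.card_filter, Finset.card_filter, Finset.card_filter,
    sum_range_glue r j hj1 hjr]
  have e0 : (if glueN j a b 0 = false ∧ ¬ Odd 0 then 1 else 0) = 0 := by
    simp [glueN_zero]
  have e1 : ∀ s ∈ Finset.range (2*(j-1)),
      (if glueN j a b (1+s) = false ∧ ¬ Odd (1+s) then 1 else 0)
        = (if a s = false ∧ Odd s then 1 else 0) := by
    intro s hs
    rw [Finset.mem_range] at hs
    have hg : glueN j a b (1+s) = a s := by
      rw [glueN_mid j a b (1+s) (by omega) (by omega)]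
      congr 1; omega
    have hodd : ¬ Odd (1+s) ↔ Odd s := by
      simp only [Nat.odd_iff]; omega
    rw [hg]
    simp only [hodd]
  have e2 : (if glueN j a b (2*j-1) = false ∧ ¬ Odd (2*j-1) then 1 else 0) = 0 := by
    have : Odd (2*j-1) := by simp only [Nat.odd_iff]; omega
    simp [this]
  have e3 : ∀ s ∈ Finset.range (2*(r-j)),
      (if glueN j a b (2*j+s) = false ∧ ¬ Odd (2*j+s) then 1 else 0)
        = (if b s = false ∧ ¬ Odd s then 1 else 0) := by
    intro s hs
    have hodd : ¬ Odd (2*j+s) ↔ ¬ Odd s := by simp only [Nat.odd_iff]; omega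
    rw [glueN_right j a b hj1 s]
    simp only [hodd]
  rw [e0, e2, Finset.sum_congr rfl e1, Finset.sum_congr rfl e3]
  ring

/-- Fin-level glue. -/
def glueF (r j : ℕ) (A : Fin (2*(j-1)) → Bool) (B : Fin (2*(r-j)) → Bool) :
    Fin (2*r) → Bool :=
  fun i => glueN j (ext (2*(j-1)) A) (ext (2*(r-j)) B) (i : ℕ)

lemma ext_glueF (r j : ℕ) (A : Fin (2*(j-1)) → Bool) (B : Fin (2*(r-j)) → Bool) :
    ∀ t < 2*r, ext (2*r) (glueF r j A B) t
      = glueN j (ext (2*(j-1)) A) (ext (2*(r-j)) B) t := by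
  intro t ht
  unfold ext glueF
  rw [dif_pos ht]
  rfl

section GlueDyck

variable (r j : ℕ) (hj1 : 1 ≤ j) (hjr : j ≤ r)
  (A : Fin (2*(j-1)) → Bool) (B : Fin (2*(r-j)) → Bool)

lemma hgt_ext_glueF (i : ℕ) (hi : i ≤ 2*r) :
    hgt (ext (2*r) (glueF r j A B)) i
      = hgt (glueN j (ext (2*(j-1)) A) (ext (2*(r-j)) B)) i :=
  hgt_congr _ _ i (fun t ht => ext_glueF r j A B t (lt_of_lt_of_le ht hi))

include hj1 hjr

lemma glueF_isDyck (hA : IsDyckPath (j-1) A) (hB : IsDyckPath (r-j) B) :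
    IsDyckPath r (glueF r j A B) := by
  rw [isDyckPath_iff] at hA hB ⊢
  set a := ext (2*(j-1)) A with ha
  set b := ext (2*(r-j)) B with hb
  constructor
  · rw [hgt_ext_glueF r j A B (2*r) le_rfl, show 2*r = 2*j + 2*(r-j) by omega,
      hgt_glueN_right j a b hj1, hA.1, hB.1]
    ring
  · intro i hi
    rw [hgt_ext_glueF r j A B i hi]
    rcases Nat.eq_zero_or_pos i with h0 | h0
    · subst h0; simp [hgt]
    rcases Nat.lt_or_ge i (2*j) with hlt | hge
    · have hi1 : i - 1 ≤ 2*(j-1) := by omega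
      rw [show i = (i-1)+1 by omega, hgt_glueN_left j a b hj1 (i-1) hi1]
      have := hA.2 (i-1) hi1
      omega
    · have ht : i - 2*j ≤ 2*(r-j) := by omega
      rw [show i = 2*j + (i - 2*j) by omega, hgt_glueN_right j a b hj1, hA.1]
      have := hB.2 (i - 2*j) ht
      omega

end GlueDyck

/-- first-return analysis of a Dyck path. -/
lemma first_return (r : ℕ) (hr : 1 ≤ r) (g : ℕ → Bool) (hD : DyN r g) (j : ℕ)
    (hj1 : 1 ≤ j) (hj0 : hgt g (2*j) = 0)
    (hmin : ∀ i, 1 ≤ i → i < j → hgt g (2*i) ≠ 0) :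
    j ≤ r ∧ g 0 = true ∧ g (2*j-1) = false ∧
      DyN (j-1) (fun s => g (s+1)) ∧ DyN (r-j) (fun s => g (s + 2*j)) ∧
      (∀ t < 2*r, glueN j (fun s => g (s+1)) (fun s => g (s + 2*j)) t = g t) := by
  obtain ⟨hend, hnn⟩ := hD
  have hjr : j ≤ r := by
    by_contra hc
    exact hmin r hr (by omega) hend
  -- heights are ≥ 1 strictly inside the first arch
  have key : ∀ t, 1 ≤ t → t ≤ 2*j - 1 → 1 ≤ hgt g t := by
    intro t h1 h2
    have hnn' : 0 ≤ hgt g t := hnn t (by omega)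
    rcases eq_or_lt_of_le hnn' with heq | hlt
    · exfalso
      have hpar : ¬ Odd (hgt g t) := by rw [← heq]; simp
      rw [hgt_parity] at hpar
      rw [Nat.odd_iff] at hpar
      have ht2 : t % 2 = 0 := by omega
      have : t = 2 * (t/2) := by omega
      rw [this] at heq
      exact hmin (t/2) (by omega) (by omega) heq.symm
    · omega
  have hg0 : g 0 = true := by
    have h1 : 1 ≤ hgt g 1 := key 1 le_rfl (by omega)
    by_contra hc
    have hc' : g 0 = false := by simpa using hc
    rw [show (1:ℕ) = 0 + 1 from rfl, hgt, hc'] at h1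
    simp [hgt] at h1
  have hgret : g (2*j-1) = false := by
    have h1 : 1 ≤ hgt g (2*j-1) := key (2*j-1) (by omega) le_rfl
    by_contra hc
    have hc' : g (2*j-1) = true := by simpa using hc
    rw [show 2*j = (2*j-1)+1 by omega, hgt, hc'] at hj0
    simp at hj0
    omega
  have hretv : hgt g (2*j-1) = 1 := by
    have h1 : 1 ≤ hgt g (2*j-1) := key (2*j-1) (by omega) le_rfl
    rw [show 2*j = (2*j-1)+1 by omega, hgt, hgret] at hj0
    simp at hj0
    omega
  -- heights of the shifted pieces
  have hA : ∀ t ≤ 2*(j-1), hgt (fun s => g (s+1)) t = hgt g (t+1) - 1 := by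
    intro t _
    have := hgt_add g 1 t
    rw [show (1:ℕ) = 0 + 1 from rfl, hgt, hg0] at this
    simp [hgt] at this
    rw [Nat.add_comm 1 t] at this
    rw [this]
    have : (fun s => g (1 + s)) = (fun s => g (s + 1)) := by
      funext s; rw [Nat.add_comm]
    rw [this]
    ring
  have hB : ∀ t, hgt (fun s => g (s + 2*j)) t = hgt g (2*j + t) := by
    intro t
    rw [hgt_add g (2*j) t, hj0]
    have : (fun s => g (2*j + s)) = (fun s => g (s + 2*j)) := by
      funext s; rw [Nat.add_comm]
    rw [this]
    ring
  refine ⟨hjr, hg0, hgret, ⟨?_, ?_⟩, ⟨?_, ?_⟩, ?_⟩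
  · rw [hA (2*(j-1)) le_rfl, show 2*(j-1)+1 = 2*j-1 by omega, hretv]
    ring
  · intro i hi
    rw [hA i hi]
    have := key (i+1) (by omega) (by omega)
    omega
  · rw [hB, show 2*j + 2*(r-j) = 2*r by omega, hend]
  · intro i hi
    rw [hB]
    have := hnn (2*j + i) (by omega)
    omega
  · intro t ht
    rcases Nat.eq_zero_or_pos t with h0 | h0
    · subst h0; rw [glueN_zero, hg0]
    rcases Nat.lt_or_ge t (2*j - 1) with hlt | hge
    · rw [glueN_mid j _ _ t h0 hlt]
      congr 1; omega
    rcases Nat.eq_or_lt_of_le hge with heq | hgt'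
    · rw [← heq, glueN_ret j _ _ hj1, hgret]
    · rw [show t = 2*j + (t - 2*j) by omega, glueN_right j _ _ hj1]
      congr 1; omega

lemma glueN_congr (r j : ℕ) (hj1 : 1 ≤ j) (hjr : j ≤ r) (a a' b b' : ℕ → Bool)
    (ha : ∀ s < 2*(j-1), a s = a' s) (hb : ∀ s < 2*(r-j), b s = b' s) :
    ∀ t < 2*r, glueN j a b t = glueN j a' b' t := by
  intro t ht
  unfold glueN
  rcases Nat.eq_zero_or_pos t with h0 | h0
  · subst h0; simp
  simp only [if_neg (show ¬ t = 0 by omega)]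
  by_cases hlt : t < 2*j - 1
  · simp only [if_pos hlt]
    rw [ha (t-1) (by omega)]
  · simp only [if_neg hlt]
    by_cases heq : t = 2*j - 1
    · simp only [if_pos heq]
    · simp only [if_neg heq]
      rw [hb (t - 2*j) (by omega)]

def retEx (r : ℕ) (hr : 1 ≤ r) (f : Fin (2*r) → Bool) (hf : IsDyckPath r f) :
    ∃ j, 1 ≤ j ∧ hgt (ext (2*r) f) (2*j) = 0 :=
  ⟨r, hr, ((isDyckPath_iff r f).mp hf).1⟩

/-- decomposition of a Dyck path at its first return to 0. -/
def decompose (r : ℕ) (hr : 1 ≤ r) (f : Fin (2*r) → Bool) (hf : IsDyckPath r f) :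
    Σ j : ℕ, (Fin (2*(j-1)) → Bool) × (Fin (2*(r-j)) → Bool) :=
  ⟨Nat.find (retEx r hr f hf),
    fun i => ext (2*r) f ((i:ℕ)+1),
    fun i => ext (2*r) f ((i:ℕ) + 2*(Nat.find (retEx r hr f hf)))⟩

lemma decompose_spec (r : ℕ) (hr : 1 ≤ r) (f : Fin (2*r) → Bool) (hf : IsDyckPath r f) :
    Nat.find (retEx r hr f hf) ≤ r ∧ ext (2*r) f 0 = true ∧
      ext (2*r) f (2*(Nat.find (retEx r hr f hf))-1) = false ∧
      DyN (Nat.find (retEx r hr f hf) - 1) (fun s => ext (2*r) f (s+1)) ∧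
      DyN (r - Nat.find (retEx r hr f hf))
        (fun s => ext (2*r) f (s + 2*(Nat.find (retEx r hr f hf)))) ∧
      (∀ t < 2*r, glueN (Nat.find (retEx r hr f hf)) (fun s => ext (2*r) f (s+1))
          (fun s => ext (2*r) f (s + 2*(Nat.find (retEx r hr f hf)))) t
        = ext (2*r) f t) := by
  have hspec := Nat.find_spec (retEx r hr f hf)
  exact first_return r hr (ext (2*r) f) ((isDyckPath_iff r f).mp hf)
    (Nat.find (retEx r hr f hf)) hspec.1 hspec.2
    (fun i h1 h2 h0 => Nat.find_min (retEx r hr f hf) h2 ⟨h1, h0⟩)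

/-- The index set for the first-return decomposition. -/
def sigmaSet (r : ℕ) :
    Finset (Σ j : ℕ, (Fin (2*(j-1)) → Bool) × (Fin (2*(r-j)) → Bool)) :=
  (Finset.Icc 1 r).sigma
    (fun j => (Finset.univ.filter (IsDyckPath (j-1))) ×ˢ
      (Finset.univ.filter (IsDyckPath (r-j))))

lemma decompose_mem (r : ℕ) (hr : 1 ≤ r) (f : Fin (2*r) → Bool) (hf : IsDyckPath r f) :
    decompose r hr f hf ∈ sigmaSet r := by
  obtain ⟨hjr, hg0, hgret, hDA, hDB, hglue⟩ := decompose_spec r hr f hf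
  set j := Nat.find (retEx r hr f hf) with hj
  have hj1 : 1 ≤ j := (Nat.find_spec (retEx r hr f hf)).1
  unfold sigmaSet decompose
  rw [Finset.mem_sigma, Finset.mem_Icc, Finset.mem_product]
  refine ⟨⟨hj1, hjr⟩, ?_, ?_⟩
  · rw [Finset.mem_filter]
    refine ⟨Finset.mem_univ _, ?_⟩
    rw [isDyckPath_iff]
    refine DyN_congr _ _ _ (fun t ht => ?_) hDA
    symm
    exact (show ∀ n (A : Fin n → Bool) t (h : t < n), ext n A t = A ⟨t, h⟩ from
      fun n A t h => dif_pos h) _ _ t ht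
  · rw [Finset.mem_filter]
    refine ⟨Finset.mem_univ _, ?_⟩
    rw [isDyckPath_iff]
    refine DyN_congr _ _ _ (fun t ht => ?_) hDB
    symm
    exact (show ∀ n (A : Fin n → Bool) t (h : t < n), ext n A t = A ⟨t, h⟩ from
      fun n A t h => dif_pos h) _ _ t ht

lemma glueF_decompose (r : ℕ) (hr : 1 ≤ r) (f : Fin (2*r) → Bool) (hf : IsDyckPath r f) :
    glueF r (decompose r hr f hf).1 (decompose r hr f hf).2.1
      (decompose r hr f hf).2.2 = f := by
  obtain ⟨hjr, hg0, hgret, hDA, hDB, hglue⟩ := decompose_spec r hr f hf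
  set j := Nat.find (retEx r hr f hf) with hj
  have hj1 : 1 ≤ j := (Nat.find_spec (retEx r hr f hf)).1
  funext i
  show glueN j (ext (2*(j-1)) (fun i => ext (2*r) f ((i:ℕ)+1)))
      (ext (2*(r-j)) (fun i => ext (2*r) f ((i:ℕ) + 2*j))) (i:ℕ) = f i
  rw [glueN_congr r j hj1 hjr _ (fun s => ext (2*r) f (s+1)) _
      (fun s => ext (2*r) f (s + 2*j))
      (fun s hs => by unfold ext; rw [dif_pos hs])
      (fun s hs => by unfold ext; rw [dif_pos hs]) (i:ℕ) i.2,
    hglue (i:ℕ) i.2]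
  unfold ext
  rw [dif_pos i.2]

lemma decompose_glueF (r : ℕ) (hr : 1 ≤ r) (j : ℕ) (hj1 : 1 ≤ j) (hjr : j ≤ r)
    (A : Fin (2*(j-1)) → Bool) (B : Fin (2*(r-j)) → Bool)
    (hA : IsDyckPath (j-1) A) (hB : IsDyckPath (r-j) B)
    (hg : IsDyckPath r (glueF r j A B)) :
    decompose r hr (glueF r j A B) hg = ⟨j, (A, B)⟩ := by
  have hDA : DyN (j-1) (ext (2*(j-1)) A) := (isDyckPath_iff _ _).mp hA
  have hDB : DyN (r-j) (ext (2*(r-j)) B) := (isDyckPath_iff _ _).mp hB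
  have hfind : Nat.find (retEx r hr (glueF r j A B) hg) = j := by
    apply le_antisymm
    · apply Nat.find_le
      refine ⟨hj1, ?_⟩
      rw [hgt_ext_glueF r j A B (2*j) (by omega), hgt_glueN_ret j _ _ hj1, hDA.1]
    · rw [Nat.le_find_iff]
      rintro m hm ⟨hm1, h0⟩
      rw [hgt_ext_glueF r j A B (2*m) (by omega), show 2*m = (2*m-1)+1 by omega,
        hgt_glueN_left j _ _ hj1 (2*m-1) (by omega)] at h0
      have := hDA.2 (2*m-1) (by omega)
      omega
  unfold decompose
  set n := Nat.find (retEx r hr (glueF r j A B) hg) with hn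
  clear_value n
  subst hfind
  have hA' : (fun i : Fin (2*(n-1)) => ext (2*r) (glueF r n A B) ((i:ℕ)+1)) = A := by
    funext i
    have hi1 : (i:ℕ)+1 < 2*r := by have := i.2; omega
    have hmid : (i:ℕ)+1 < 2*n-1 := by have := i.2; omega
    unfold ext
    rw [dif_pos hi1]
    show glueN n (ext (2*(n-1)) A) (ext (2*(r-n)) B) ((i:ℕ)+1) = A i
    rw [glueN_mid n _ _ ((i:ℕ)+1) (by omega) hmid]
    simp only [Nat.add_sub_cancel]
    unfold ext
    rw [dif_pos i.2]
  have hB' : (fun i : Fin (2*(r-n)) => ext (2*r) (glueF r n A B) ((i:ℕ)+2*n)) = B := by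
    funext i
    have hi1 : (i:ℕ) + 2*n < 2*r := by have := i.2; omega
    unfold ext
    rw [dif_pos hi1]
    show glueN n (ext (2*(n-1)) A) (ext (2*(r-n)) B) ((i:ℕ)+2*n) = B i
    rw [Nat.add_comm, glueN_right n _ _ hj1]
    unfold ext
    rw [dif_pos i.2]
  rw [hA', hB']



lemma aCount_glueF (r j : ℕ) (hj1 : 1 ≤ j) (hjr : j ≤ r)
    (A : Fin (2*(j-1)) → Bool) (B : Fin (2*(r-j)) → Bool)
    (hA : IsDyckPath (j-1) A) (hB : IsDyckPath (r-j) B) :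
    aCount r (glueF r j A B) = ((j-1) - aCount (j-1) A) + 1 + aCount (r-j) B ∧
    r - aCount r (glueF r j A B) = aCount (j-1) A + ((r-j) - aCount (r-j) B) := by
  have h1 : aCount r (glueF r j A B)
      = aN r (glueN j (ext (2*(j-1)) A) (ext (2*(r-j)) B)) := by
    rw [aCount_eq_aN]
    exact aN_congr r _ _ (ext_glueF r j A B)
  have hDA := (isDyckPath_iff _ _).mp hA
  have hDB := (isDyckPath_iff _ _).mp hB
  have hsA : aN (j-1) (ext (2*(j-1)) A) + bN (j-1) (ext (2*(j-1)) A) = j-1 :=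
    aN_add_bN _ _ hDA.1
  have hsB : aN (r-j) (ext (2*(r-j)) B) + bN (r-j) (ext (2*(r-j)) B) = r-j :=
    aN_add_bN _ _ hDB.1
  rw [h1, aN_glueN r j hj1 hjr, aCount_eq_aN, aCount_eq_aN]
  omega

theorem dWeight_rec {R : Type*} [CommRing R] (α β : R) (r : ℕ) (hr : 1 ≤ r) :
    dWeight α β r = α * ∑ j ∈ Finset.Icc 1 r, dWeight β α (j-1) * dWeight α β (r-j) := by
  rw [Finset.mul_sum]
  have step : ∀ j ∈ Finset.Icc 1 r,
      α * (dWeight β α (j-1) * dWeight α β (r-j))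
        = ∑ p ∈ (Finset.univ.filter (IsDyckPath (j-1))) ×ˢ
            (Finset.univ.filter (IsDyckPath (r-j))),
            α * ((α ^ ((j-1) - aCount (j-1) p.1) * β ^ (aCount (j-1) p.1)) *
                 (β ^ ((r-j) - aCount (r-j) p.2) * α ^ (aCount (r-j) p.2))) := by
    intro j hj
    unfold dWeight
    rw [Finset.sum_mul_sum, Finset.mul_sum, Finset.sum_product]
    refine Finset.sum_congr rfl fun A _ => ?_
    rw [Finset.mul_sum]
  rw [Finset.sum_congr rfl step, Finset.sum_sigma']
  unfold dWeight
  symm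
  refine Finset.sum_bij' (fun p _ => glueF r p.1 p.2.1 p.2.2)
    (fun f hf => decompose r hr f (Finset.mem_filter.mp hf).2) ?_ ?_ ?_ ?_ ?_
  · rintro ⟨j, A, B⟩ hp
    rw [Finset.mem_sigma, Finset.mem_Icc, Finset.mem_product,
      Finset.mem_filter, Finset.mem_filter] at hp
    rw [Finset.mem_filter]
    exact ⟨Finset.mem_univ _, glueF_isDyck r j hp.1.1 hp.1.2 A B hp.2.1.2 hp.2.2.2⟩
  · intro f hf
    exact decompose_mem r hr f (Finset.mem_filter.mp hf).2
  · rintro ⟨j, A, B⟩ hp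
    rw [Finset.mem_sigma, Finset.mem_Icc, Finset.mem_product,
      Finset.mem_filter, Finset.mem_filter] at hp
    exact decompose_glueF r hr j hp.1.1 hp.1.2 A B hp.2.1.2 hp.2.2.2 _
  · intro f hf
    exact glueF_decompose r hr f (Finset.mem_filter.mp hf).2
  · rintro ⟨j, A, B⟩ hp
    rw [Finset.mem_sigma, Finset.mem_Icc, Finset.mem_product,
      Finset.mem_filter, Finset.mem_filter] at hp
    obtain ⟨hc1, hc2⟩ := aCount_glueF r j hp.1.1 hp.1.2 A B hp.2.1.2 hp.2.2.2
    dsimp only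
    rw [hc2, hc1, pow_add, pow_add, pow_add]
    ring

lemma eWeight_eq_swap {R : Type*} [CommRing R] (α β : R) (r : ℕ) :
    eWeight α β r = dWeight β α r := by
  unfold eWeight dWeight
  exact Finset.sum_congr rfl fun f _ => mul_comm _ _

lemma dWeight_zero {R : Type*} [CommRing R] (α β : R) : dWeight α β 0 = 1 := by
  unfold dWeight
  have h1 : Finset.univ.filter (IsDyckPath 0) = Finset.univ := by
    refine Finset.filter_true_of_mem fun f _ => ?_
    constructor
    · unfold pathHeight
      exact Finset.sum_eq_zero fun j _ => j.elim0
    · intro i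
      unfold pathHeight
      have h0 : ∀ j ∈ Finset.univ.filter (fun j : Fin (2*0) => (j:ℕ) < (i:ℕ)),
          (if f j then (1:ℤ) else -1) = 0 := fun j _ => j.elim0
      rw [Finset.sum_eq_zero h0]
  have h2 : ∀ f : Fin (2*0) → Bool, aCount 0 f = 0 := by
    intro f
    unfold aCount
    rw [Finset.card_eq_zero]
    apply Finset.eq_empty_of_forall_notMem
    intro j _
    exact j.elim0
  rw [h1]
  have h3 : ∀ f ∈ (Finset.univ : Finset (Fin (2*0) → Bool)),
      β ^ (0 - aCount 0 f) * α ^ (aCount 0 f) = 1 := by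
    intro f _
    rw [h2 f]
    simp
  rw [Finset.sum_congr rfl h3, Finset.sum_const, Finset.card_univ]
  have : Fintype.card (Fin (2*0) → Bool) = 1 := by
    rw [Fintype.card_fun]
    simp
  rw [this]
  simp

lemma sum_reflect {R : Type*} [CommRing R] (F G : ℕ → R) (r : ℕ) :
    ∑ j ∈ Finset.Icc 1 r, F (j-1) * G (r-j)
      = ∑ j ∈ Finset.Icc 1 r, G (j-1) * F (r-j) := by
  refine Finset.sum_nbij' (fun j => r+1-j) (fun j => r+1-j) ?_ ?_ ?_ ?_ ?_
  · intro j hj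
    rw [Finset.mem_Icc] at hj ⊢
    omega
  · intro j hj
    rw [Finset.mem_Icc] at hj ⊢
    omega
  · intro j hj
    rw [Finset.mem_Icc] at hj
    omega
  · intro j hj
    rw [Finset.mem_Icc] at hj
    omega
  · intro j hj
    rw [Finset.mem_Icc] at hj
    rw [show r+1-j-1 = r-j by omega, show r-(r+1-j) = j-1 by omega]
    ring

lemma part1 {R : Type*} [CommRing R] (α β : R) (r : ℕ) (hr : 1 ≤ r) :
    β * dWeight α β r = α * eWeight α β r := by
  rw [eWeight_eq_swap, dWeight_rec α β r hr, dWeight_rec β α r hr,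
    ← mul_assoc, ← mul_assoc, mul_comm β α]
  congr 1
  exact sum_reflect (dWeight β α) (dWeight α β) r

lemma part2 {R : Type*} [CommRing R] (α β : R) (r : ℕ) (hr : 1 ≤ r) :
    dWeight α β r
      = β * (∑ j ∈ Finset.Icc 2 r, dWeight α β (r - j) * dWeight α β (j - 1))
        + α * dWeight α β (r - 1) := by
  rw [dWeight_rec α β r hr]
  have hsplit : Finset.Icc 1 r = insert 1 (Finset.Icc 2 r) := by
    ext x
    rw [Finset.mem_insert, Finset.mem_Icc, Finset.mem_Icc]
    omega
  rw [hsplit, Finset.sum_insert (by rw [Finset.mem_Icc]; omega)]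
  have hterm : ∀ j ∈ Finset.Icc 2 r,
      α * (dWeight β α (j-1) * dWeight α β (r-j))
        = β * (dWeight α β (r-j) * dWeight α β (j-1)) := by
    intro j hj
    rw [Finset.mem_Icc] at hj
    have key : α * dWeight β α (j-1) = β * dWeight α β (j-1) := by
      rw [← eWeight_eq_swap]
      exact (part1 α β (j-1) (by omega)).symm
    calc α * (dWeight β α (j-1) * dWeight α β (r-j))
        = (α * dWeight β α (j-1)) * dWeight α β (r-j) := by ring
      _ = (β * dWeight α β (j-1)) * dWeight α β (r-j) := by rw [key]
      _ = β * (dWeight α β (r-j) * dWeight α β (j-1)) := by ring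
  rw [mul_add, Finset.mul_sum, Finset.sum_congr rfl hterm, ← Finset.mul_sum,
    dWeight_zero]
  ring

open MvPolynomial in
/-- With `α, β` formal variables over `ℚ`, and `d_r`, `e_r` the weighted Dyck-path counts,
one has `β·d_r = α·e_r` for all `r ≥ 1`, and hence the recursion
`d_r = β Σ_{j=2}^r d_{r−j} d_{j−1} + α d_{r−1}`. -/
theorem beta_dWeight_eq_alpha_eWeight (r : ℕ) (hr : 1 ≤ r) :
    letI α : MvPolynomial Bool ℚ := MvPolynomial.X true
    letI β : MvPolynomial Bool ℚ := MvPolynomial.X false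
    β * dWeight α β r = α * eWeight α β r ∧
    dWeight α β r
      = β * (∑ j ∈ Finset.Icc 2 r, dWeight α β (r - j) * dWeight α β (j - 1))
        + α * dWeight α β (r - 1) := by
  exact ⟨part1 _ _ r hr, part2 _ _ r hr⟩
end

section
/- Fix α ≥ 1 and let ν_α be the measure on [(√α−1)², (√α+1)²] with density (x + α − 1)/(2πx·√(4α − (x − (α+1))²)). Then the moment generating function satisfies 1 + Σ_{k≥1} (∫ x^k dν_α) z^k = (1/2)(1 + ((α−1)z + 1)/√((α−1)²z² − 2(α+1)z + 1)) as an identity of formal power series (convergent for small |z|). -/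
open Real MeasureTheory Set intervalIntegral

lemma integral_inv_sub_cos {A B : ℝ} (h : |B| < A) :
    ∫ θ in (0:ℝ)..π, (A - B * Real.cos θ)⁻¹ = π / Real.sqrt (A ^ 2 - B ^ 2) := by
  have hA : 0 < A := (abs_nonneg B).trans_lt h
  have hq : 0 < A ^ 2 - B ^ 2 := by
    have := sq_abs B ▸ (pow_lt_pow_left₀ h (abs_nonneg B) (by norm_num) : |B| ^ 2 < A ^ 2)
    linarith
  set D : ℝ := Real.sqrt (A ^ 2 - B ^ 2) with hD
  have hDpos : 0 < D := Real.sqrt_pos.2 hq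
  have hD2 : D ^ 2 = A ^ 2 - B ^ 2 := Real.sq_sqrt hq.le
  have hden : ∀ θ : ℝ, 0 < A - B * Real.cos θ := by
    intro θ
    have h1 : |B * Real.cos θ| ≤ |B| := by
      rw [abs_mul]
      exact mul_le_of_le_one_right (abs_nonneg B) (Real.abs_cos_le_one θ)
    have := (abs_le.1 h1).2
    linarith
  set u : ℝ → ℝ := fun θ => (A * Real.cos θ - B) / (A - B * Real.cos θ) with hu
  set F : ℝ → ℝ := fun θ => D⁻¹ * Real.arccos (u θ) with hF
  have hucont : Continuous u :=
    Continuous.div (by fun_prop) (by fun_prop) (fun θ => (hden θ).ne')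
  have hFcont : Continuous F := by
    exact continuous_const.mul (Real.continuous_arccos.comp hucont)
  have key : ∀ θ ∈ Ioo (0:ℝ) π,
      HasDerivAt F ((A - B * Real.cos θ)⁻¹) θ := by
    intro θ hθ
    have hsin : 0 < Real.sin θ := Real.sin_pos_of_pos_of_lt_pi hθ.1 hθ.2
    have hdθ : 0 < A - B * Real.cos θ := hden θ
    -- 1 - u θ ^ 2 = (D * sin θ / (A - B cos θ))^2
    have h1u : 1 - u θ ^ 2 = (D * Real.sin θ / (A - B * Real.cos θ)) ^ 2 := by
      rw [hu]
      field_simp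
      have hne2 : (A - Real.cos θ * B) ^ 2 ≠ 0 := pow_ne_zero 2 (by linarith [hdθ, mul_comm B (Real.cos θ)])
      rw [hD2, eq_div_iff hne2, sub_mul, div_mul_cancel₀ _ hne2]
      linear_combination (B ^ 2 - A ^ 2) * Real.sin_sq_add_cos_sq θ
    have hsq : Real.sqrt (1 - u θ ^ 2) = D * Real.sin θ / (A - B * Real.cos θ) := by
      rw [h1u, Real.sqrt_sq (by positivity)]
    have h1upos : 0 < 1 - u θ ^ 2 := by rw [h1u]; positivity
    have hune1 : u θ ≠ 1 := by intro hq1; rw [hq1] at h1upos; norm_num at h1upos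
    have hunem1 : u θ ≠ -1 := by intro hq1; rw [hq1] at h1upos; norm_num at h1upos
    have hud : HasDerivAt u
        (((-(A * Real.sin θ)) * (A - B * Real.cos θ) -
          (A * Real.cos θ - B) * (B * Real.sin θ)) / (A - B * Real.cos θ) ^ 2) θ := by
      have h1 : HasDerivAt (fun θ : ℝ => A * Real.cos θ - B) (-(A * Real.sin θ)) θ := by
        simpa [mul_comm] using ((Real.hasDerivAt_cos θ).const_mul A).sub_const B
      have h2 : HasDerivAt (fun θ : ℝ => A - B * Real.cos θ) (B * Real.sin θ) θ := by
        simpa using (((Real.hasDerivAt_cos θ).const_mul B)).const_sub A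
      exact h1.div h2 hdθ.ne'
    have harc : HasDerivAt Real.arccos (-(1 / Real.sqrt (1 - u θ ^ 2))) (u θ) :=
      Real.hasDerivAt_arccos hunem1 hune1
    have := (harc.comp θ hud).const_mul D⁻¹
    refine HasDerivAt.congr_deriv this ?_
    rw [hsq]
    have hnum : (-(A * Real.sin θ)) * (A - B * Real.cos θ) -
        (A * Real.cos θ - B) * (B * Real.sin θ) = -(Real.sin θ * (A ^ 2 - B ^ 2)) := by ring
    rw [hnum, ← hD2]
    field_simp
  have hle : (0:ℝ) ≤ π := Real.pi_pos.le
  have hint : IntervalIntegrable (fun θ => (A - B * Real.cos θ)⁻¹) volume 0 π :=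
    (Continuous.inv₀ (by fun_prop) (fun θ => (hden θ).ne')).intervalIntegrable 0 π
  rw [integral_eq_sub_of_hasDeriv_right_of_le hle hFcont.continuousOn
      (fun θ hθ => (key θ hθ).hasDerivWithinAt) hint]
  have hABpos : 0 < A - B := by have := (abs_lt.1 h).2; linarith
  have hABpos' : 0 < A + B := by have := (abs_lt.1 h).1; linarith
  have hu0 : u 0 = 1 := by
    show (A * Real.cos 0 - B) / (A - B * Real.cos 0) = 1
    rw [Real.cos_zero, mul_one, mul_one, div_eq_one_iff_eq hABpos.ne']
  have huπ : u π = -1 := by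
    show (A * Real.cos π - B) / (A - B * Real.cos π) = -1
    rw [Real.cos_pi, div_eq_iff (by linarith : A - B * (-1) ≠ 0)]
    ring
  rw [hF]
  simp only [hu0, huπ, Real.arccos_one, Real.arccos_neg_one]
  field_simp
  ring

lemma moment_substitution (α : ℝ) (hα : 1 ≤ α) (k : ℕ) :
    (∫ x in ((α + 1) - 2 * Real.sqrt α)..((α + 1) + 2 * Real.sqrt α),
      x ^ (k + 1) * ((x + α - 1) / (2 * Real.pi * x * Real.sqrt (4 * α - (x - (α + 1)) ^ 2))))
    = ∫ θ in Ioo (0:ℝ) π,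
        ((α + 1 + 2 * Real.sqrt α * Real.cos θ) ^ k *
          (α + 1 + 2 * Real.sqrt α * Real.cos θ + α - 1)) / (2 * Real.pi) := by
  set s : ℝ := Real.sqrt α with hsdef
  have hs1 : 1 ≤ s := by
    rw [hsdef, show (1:ℝ) = Real.sqrt 1 by simp]
    exact Real.sqrt_le_sqrt hα
  have hs2 : s ^ 2 = α := Real.sq_sqrt (by linarith)
  have h2s : 0 < 2 * s := by linarith
  have himg : (fun θ => α + 1 + 2 * s * Real.cos θ) '' Ioo 0 π
      = Ioo ((α + 1) - 2 * s) ((α + 1) + 2 * s) := by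
    ext y
    constructor
    · rintro ⟨θ, hθ, rfl⟩
      have hc1 : Real.cos θ < 1 := by
        have := Real.strictAntiOn_cos ⟨le_refl 0, Real.pi_pos.le⟩
          ⟨hθ.1.le, hθ.2.le⟩ hθ.1
        simpa using this
      have hc2 : -1 < Real.cos θ := by
        have := Real.strictAntiOn_cos ⟨hθ.1.le, hθ.2.le⟩
          ⟨Real.pi_pos.le, le_refl π⟩ hθ.2
        simpa using this
      constructor <;> · simp only []; nlinarith
    · intro hy
      have ht1 : -1 < (y - (α + 1)) / (2 * s) := by
        rw [lt_div_iff₀ h2s]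
        have := hy.1; nlinarith
      have ht2 : (y - (α + 1)) / (2 * s) < 1 := by
        rw [div_lt_one h2s]
        have := hy.2; nlinarith
      refine ⟨Real.arccos ((y - (α + 1)) / (2 * s)), ⟨Real.arccos_pos.2 ht2, ?_⟩, ?_⟩
      · rw [Real.arccos]
        have := Real.neg_pi_div_two_lt_arcsin.2 ht1
        linarith
      · simp only []
        rw [Real.cos_arccos ht1.le ht2.le]
        field_simp
        ring
  have hle : (α + 1) - 2 * s ≤ (α + 1) + 2 * s := by linarith
  rw [intervalIntegral.integral_of_le hle, MeasureTheory.integral_Ioc_eq_integral_Ioo,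
    ← himg]
  rw [integral_image_eq_integral_abs_deriv_smul measurableSet_Ioo
    (f' := fun θ => -(2 * s * Real.sin θ))
    (fun θ _ => by
      have : HasDerivAt (fun θ => α + 1 + 2 * s * Real.cos θ) (2 * s * (-Real.sin θ)) θ :=
        ((Real.hasDerivAt_cos θ).const_mul (2 * s)).const_add (α + 1)
      exact (by simpa [mul_neg] using this : HasDerivAt _ (-(2 * s * Real.sin θ)) θ).hasDerivWithinAt)
    (fun a ha b hb hab => by
      have : Real.cos a = Real.cos b := by
        have h := hab
        nlinarith [h]
      exact Real.injOn_cos ⟨ha.1.le, ha.2.le⟩ ⟨hb.1.le, hb.2.le⟩ this)]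
  refine MeasureTheory.setIntegral_congr_fun measurableSet_Ioo (fun θ hθ => ?_)
  have hsin : 0 < Real.sin θ := Real.sin_pos_of_pos_of_lt_pi hθ.1 hθ.2
  have hc2 : -1 < Real.cos θ := by
    have := Real.strictAntiOn_cos ⟨hθ.1.le, hθ.2.le⟩
      ⟨Real.pi_pos.le, le_refl π⟩ hθ.2
    simpa using this
  set x : ℝ := α + 1 + 2 * s * Real.cos θ with hx
  have hxpos : 0 < x := by rw [hx]; nlinarith
  have hpy := Real.sin_sq_add_cos_sq θ
  have h4 : 4 * α - (x - (α + 1)) ^ 2 = (2 * s * Real.sin θ) ^ 2 := by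
    rw [hx]; nlinarith
  rw [show (4 * α - (x - (α + 1)) ^ 2) = (2 * s * Real.sin θ) ^ 2 from h4,
    Real.sqrt_sq (by positivity)]
  rw [smul_eq_mul, abs_neg, abs_of_pos (by positivity)]
  have hπ : (0:ℝ) < Real.pi := Real.pi_pos
  field_simp
  ring

open Real in
/-- For `α ≥ 1`, let `ν_α` be the measure on `[(√α−1)², (√α+1)²]` with density
`(x + α − 1)/(2πx·√(4α − (x − (α+1))²))`, with moments
`m_k = ∫ x^k dν_α`. Then, for `z` small enough,
`1 + Σ_{k≥1} m_k z^k = (1/2)(1 + ((α−1)z + 1)/√((α−1)²z² − 2(α+1)z + 1))`. -/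
theorem moment_generating_function_Wishart_shape
    (α : ℝ) (hα : 1 ≤ α)
    (m : ℕ → ℝ)
    (hm : ∀ k : ℕ, m k = ∫ x in ((α + 1) - 2 * Real.sqrt α)..((α + 1) + 2 * Real.sqrt α),
      x ^ k * ((x + α - 1) / (2 * Real.pi * x * Real.sqrt (4 * α - (x - (α + 1)) ^ 2)))) :
    ∃ ε > 0, ∀ z : ℝ, |z| < ε →
      Summable (fun k : ℕ => m (k + 1) * z ^ (k + 1)) ∧
      1 + ∑' k : ℕ, m (k + 1) * z ^ (k + 1)
        = (1 / 2) * (1 + ((α - 1) * z + 1)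
            / Real.sqrt ((α - 1) ^ 2 * z ^ 2 - 2 * (α + 1) * z + 1)) := by
  have hπ : (0:ℝ) < π := Real.pi_pos
  set s : ℝ := Real.sqrt α with hsdef
  have hs1 : 1 ≤ s := by
    rw [hsdef, show (1:ℝ) = Real.sqrt 1 by simp]
    exact Real.sqrt_le_sqrt hα
  have hs2 : s ^ 2 = α := Real.sq_sqrt (by linarith)
  set R : ℝ := (α + 1) + 2 * s with hRdef
  have hR4 : 4 ≤ R := by rw [hRdef]; linarith
  set g : ℝ → ℝ := fun θ => α + 1 + 2 * s * Real.cos θ with hgdef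
  have hgcont : Continuous g := by fun_prop
  have hgb : ∀ θ, 0 ≤ g θ ∧ g θ ≤ R := by
    intro θ
    have h1 := Real.neg_one_le_cos θ
    have h2 := Real.cos_le_one θ
    constructor
    · have : (s - 1) ^ 2 ≤ g θ := by simp only [hgdef]; nlinarith
      nlinarith
    · simp only [hgdef, hRdef]; nlinarith
  have hmom : ∀ k : ℕ, m (k + 1) = ∫ θ in Ioo (0:ℝ) π, (g θ ^ k * (g θ + α - 1)) / (2 * π) := by
    intro k
    rw [hm (k + 1)]
    exact moment_substitution α hα k
  refine ⟨1 / (2 * (R + α)), by positivity, fun z hz => ?_⟩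
  have hRα : 0 < R + α := by linarith
  have hzR : |z| * R < 1 / 2 := by
    have h1 : |z| * (2 * (R + α)) < 1 := by
      rw [← lt_div_iff₀ (by positivity)]
      exact hz
    nlinarith [abs_nonneg z]
  set F : ℕ → ℝ → ℝ := fun k θ => (g θ ^ k * (g θ + α - 1)) / (2 * π) * z ^ (k + 1) with hFdef
  have hmz : ∀ k : ℕ, m (k + 1) * z ^ (k + 1) = ∫ θ in Ioo (0:ℝ) π, F k θ := by
    intro k
    rw [hmom k, ← MeasureTheory.integral_mul_const]
  set C : ℕ → ℝ := fun k => R ^ k * (R + α) / (2 * π) * |z| ^ (k + 1) with hCdef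
  have hFbound : ∀ (k : ℕ), ∀ θ ∈ Ioo (0:ℝ) π, ‖F k θ‖ ≤ C k := by
    intro k θ _
    have h0g := (hgb θ).1
    have hgR := (hgb θ).2
    have h1 : 0 ≤ g θ + α - 1 := by linarith
    simp only [hFdef, hCdef, Real.norm_eq_abs, abs_mul, abs_div, abs_pow, abs_of_nonneg h0g,
      abs_of_nonneg h1, abs_of_pos (by positivity : (0:ℝ) < 2 * π)]
    gcongr
    all_goals first
      | exact h0g
      | exact hgR
      | linarith
  have hFint : ∀ k : ℕ, Integrable (F k) (volume.restrict (Ioo (0:ℝ) π)) := by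
    intro k
    have : Continuous (F k) := by fun_prop
    exact (this.integrableOn_Icc.mono_set Set.Ioo_subset_Icc_self).integrable
  have hIoofin : volume (Ioo (0:ℝ) π) < ⊤ := by
    rw [Real.volume_Ioo]; exact ENNReal.ofReal_lt_top
  have hIooReal : (volume (Ioo (0:ℝ) π)).toReal = π := by
    rw [Real.volume_Ioo, sub_zero, ENNReal.toReal_ofReal hπ.le]
  have hnormint : ∀ k : ℕ, (∫ θ in Ioo (0:ℝ) π, ‖F k θ‖) ≤ C k * π := by
    intro k
    have h1 : ‖∫ θ in Ioo (0:ℝ) π, ‖F k θ‖‖ ≤ C k * (volume (Ioo (0:ℝ) π)).toReal := by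
      apply norm_setIntegral_le_of_norm_le_const hIoofin
      intro θ hθ
      rw [norm_norm]
      exact hFbound k θ hθ
    rw [hIooReal] at h1
    exact (le_abs_self _).trans h1
  have hCsum : Summable (fun k => C k * π) := by
    have h1 : ∀ k, C k * π = ((R + α) / 2 * |z|) * (R * |z|) ^ k := by
      intro k
      simp only [hCdef, mul_pow, pow_succ]
      field_simp
    rw [funext h1]
    exact (summable_geometric_of_lt_one (by positivity)
      (by nlinarith [abs_nonneg z] : R * |z| < 1)).mul_left _
  have hnormsum : Summable (fun k => ∫ θ in Ioo (0:ℝ) π, ‖F k θ‖) := by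
    apply Summable.of_nonneg_of_le (fun k => integral_nonneg (fun θ => norm_nonneg _))
      hnormint hCsum
  have hsum : Summable (fun k : ℕ => m (k + 1) * z ^ (k + 1)) := by
    apply Summable.of_norm_bounded hCsum
    intro k
    rw [hmz k]
    have := norm_setIntegral_le_of_norm_le_const hIoofin (hFbound k)
    rwa [measureReal_def, hIooReal] at this
  refine ⟨hsum, ?_⟩
  -- swap sum and integral
  have hswap : ∑' k : ℕ, m (k + 1) * z ^ (k + 1) = ∫ θ in Ioo (0:ℝ) π, ∑' k : ℕ, F k θ := by
    rw [funext hmz]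
    exact integral_tsum_of_summable_integral_norm hFint hnormsum
  -- pointwise sum
  have hzg : ∀ θ, ‖z * g θ‖ < 1 := by
    intro θ
    rw [Real.norm_eq_abs, abs_mul, abs_of_nonneg (hgb θ).1]
    nlinarith [(hgb θ).2, abs_nonneg z, (hgb θ).1]
  have hpt : ∀ θ, ∑' k : ℕ, F k θ = ((g θ + α - 1) * z / (2 * π)) * (1 - z * g θ)⁻¹ := by
    intro θ
    have h1 : ∀ k : ℕ, F k θ = ((g θ + α - 1) * z / (2 * π)) * (z * g θ) ^ k := by
      intro k
      simp only [hFdef, mul_pow, pow_succ]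
      ring
    rw [funext h1, tsum_mul_left, tsum_geometric_of_norm_lt_one (hzg θ)]
  rw [hswap]
  simp only [hpt]
  set A : ℝ := 1 - z * (α + 1) with hAdef
  set B : ℝ := 2 * s * z with hBdef
  have hBabs : |B| = 2 * s * |z| := by
    rw [hBdef, abs_mul, abs_of_nonneg (by positivity : (0:ℝ) ≤ 2 * s)]
  have hAB : |B| < A := by
    rw [hBabs, hAdef]
    have h1 : z * (α + 1) ≤ |z| * (α + 1) := by
      nlinarith [le_abs_self z]
    simp only [hRdef] at hzR
    nlinarith
  have hden : ∀ θ : ℝ, 0 < A - B * Real.cos θ := by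
    intro θ
    have h1 : |B * Real.cos θ| ≤ |B| := by
      rw [abs_mul]
      exact mul_le_of_le_one_right (abs_nonneg B) (Real.abs_cos_le_one θ)
    have := (abs_le.1 h1).2
    linarith
  have hint_eq : ∀ θ : ℝ, ((g θ + α - 1) * z / (2 * π)) * (1 - z * g θ)⁻¹
      = (-1) / (2 * π) + ((1 + z * (α - 1)) / (2 * π)) * (A - B * Real.cos θ)⁻¹ := by
    intro θ
    have hd := hden θ
    have h1zg : 1 - z * g θ = A - B * Real.cos θ := by
      simp only [hgdef, hAdef, hBdef]; ring
    have hnum : (g θ + α - 1) * z = (1 + z * (α - 1)) - (A - B * Real.cos θ) := by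
      rw [← h1zg]; ring
    rw [h1zg, hnum, sub_div, sub_mul, div_mul_eq_mul_div (A - B * Real.cos θ), mul_inv_cancel₀ hd.ne']
    ring
  simp only [hint_eq]
  rw [← MeasureTheory.integral_Ioc_eq_integral_Ioo, ← intervalIntegral.integral_of_le hπ.le]
  have hcont_inv : Continuous fun θ : ℝ => (A - B * Real.cos θ)⁻¹ :=
    Continuous.inv₀ (by fun_prop) (fun θ => (hden θ).ne')
  rw [intervalIntegral.integral_add (f := fun _ => -1 / (2 * π))
    (g := fun θ => (1 + z * (α - 1)) / (2 * π) * (A - B * Real.cos θ)⁻¹) (intervalIntegrable_const)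
    ((continuous_const.mul hcont_inv).intervalIntegrable 0 π),
    intervalIntegral.integral_const, intervalIntegral.integral_const_mul,
    integral_inv_sub_cos hAB]
  have hq : A ^ 2 - B ^ 2 = (α - 1) ^ 2 * z ^ 2 - 2 * (α + 1) * z + 1 := by
    simp only [hAdef, hBdef]
    linear_combination (-4 * z ^ 2) * hs2
  have hqpos : 0 < A ^ 2 - B ^ 2 := by
    nlinarith [sq_abs B, abs_nonneg B]
  rw [← hq]
  have hD : 0 < Real.sqrt (A ^ 2 - B ^ 2) := Real.sqrt_pos.2 hqpos
  rw [smul_eq_mul]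
  field_simp
  ring
end

section
/- On the space F([a,b]) of real-valued functions supported on [a,b] satisfying the 1-Lipschitz condition |f(x₁) − f(x₂)| ≤ |x₁ − x₂|, the weak topology defined by the functionals f ↦ ∫_a^b f(x)x^k dx, k = 0,1,2,..., coincides with the topology of uniform convergence; in particular, if f_n, f ∈ F([a,b]) and ∫ f_n(x)x^k dx → ∫ f(x)x^k dx for all k ≥ 0, then f_n → f uniformly on [a,b]. -/
open Set Filter Topology intervalIntegral

private lemma momaux_zero_of_le {a b : ℝ} (hba : b ≤ a) {f : ℝ → ℝ}
    (hf : LipschitzWith 1 f) (h0 : ∀ x ∉ Set.Icc a b, f x = 0) : f = 0 := by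
  funext x
  by_cases hx : x ∈ Set.Icc a b
  · have hx1 : x = a := le_antisymm (hx.2.trans hba) hx.1
    have h : ∀ ε > 0, |f x| ≤ 0 + ε := by
      intro ε hε
      have hy : a + ε ∉ Set.Icc a b := by
        simp only [Set.mem_Icc, not_and, not_le]
        intro _; linarith
      have := hf.dist_le_mul x (a + ε)
      rw [h0 _ hy, NNReal.coe_one, one_mul, dist_zero_right, Real.dist_eq] at this
      calc |f x| ≤ |x - (a + ε)| := this
        _ = 0 + ε := by rw [hx1]; rw [abs_of_nonpos (by linarith)]; ring
    have := le_of_forall_pos_le_add h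
    simpa using abs_nonpos_iff.mp (by linarith [abs_nonneg (f x)] : |f x| ≤ 0)
  · exact h0 x hx

private lemma momaux_bound {a b : ℝ} {f : ℝ → ℝ}
    (hf : LipschitzWith 1 f) (h0 : ∀ x ∉ Set.Icc a b, f x = 0) {x : ℝ}
    (hx : x ∈ Set.Icc a b) : |f x| ≤ min (x - a) (b - x) := by
  refine le_min ?_ ?_
  · refine le_of_forall_pos_le_add fun ε hε => ?_
    have hy : a - ε ∉ Set.Icc a b := by
      simp only [Set.mem_Icc, not_and, not_le]; intro h; linarith
    have := hf.dist_le_mul x (a - ε)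
    rw [h0 _ hy, NNReal.coe_one, one_mul, dist_zero_right, Real.dist_eq] at this
    calc |f x| ≤ |x - (a - ε)| := this
      _ = x - a + ε := by rw [abs_of_nonneg (by linarith [hx.1])]; ring
  · refine le_of_forall_pos_le_add fun ε hε => ?_
    have hy : b + ε ∉ Set.Icc a b := by
      simp only [Set.mem_Icc, not_and, not_le]; intro h; linarith
    have := hf.dist_le_mul x (b + ε)
    rw [h0 _ hy, NNReal.coe_one, one_mul, dist_zero_right, Real.dist_eq] at this
    calc |f x| ≤ |x - (b + ε)| := this
      _ = b - x + ε := by rw [abs_of_nonpos (by linarith [hx.2])]; ring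

/-- extension by zero -/
private noncomputable def momaux_ext {a b : ℝ} (g : Set.Icc a b → ℝ) : ℝ → ℝ :=
  fun x => if hx : x ∈ Set.Icc a b then g ⟨x, hx⟩ else 0

private lemma momaux_ext_lip {a b : ℝ} {g : Set.Icc a b → ℝ}
    (hg : ∀ x y, dist (g x) (g y) ≤ dist x y)
    (hbd : ∀ x : Set.Icc a b, |g x| ≤ min (x.1 - a) (b - x.1)) :
    LipschitzWith 1 (momaux_ext g) := by
  have key : ∀ x y : ℝ, x ∈ Set.Icc a b → y ∉ Set.Icc a b →
      dist (momaux_ext g x) (momaux_ext g y) ≤ dist x y := by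
    intro x y hx hy
    simp only [momaux_ext]
    rw [dif_pos hx, dif_neg hy, dist_zero_right, Real.norm_eq_abs, Real.dist_eq]
    have hy' : y < a ∨ b < y := by
      by_contra hcon
      push_neg at hcon
      exact hy ⟨hcon.1, hcon.2⟩
    rcases hy' with h | h
    · calc |g ⟨x, hx⟩| ≤ min (x - a) (b - x) := hbd _
        _ ≤ x - a := min_le_left _ _
        _ ≤ x - y := by linarith
        _ ≤ |x - y| := le_abs_self _
    · calc |g ⟨x, hx⟩| ≤ min (x - a) (b - x) := hbd _
        _ ≤ b - x := min_le_right _ _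
        _ ≤ y - x := by linarith
        _ ≤ |x - y| := by rw [abs_sub_comm]; exact le_abs_self _
  refine LipschitzWith.of_dist_le_mul fun x y => ?_
  rw [NNReal.coe_one, one_mul]
  by_cases hx : x ∈ Set.Icc a b <;> by_cases hy : y ∈ Set.Icc a b
  · simp only [momaux_ext]
    rw [dif_pos hx, dif_pos hy]
    simpa [Subtype.dist_eq] using hg ⟨x, hx⟩ ⟨y, hy⟩
  · exact key x y hx hy
  · rw [dist_comm, dist_comm x y]; exact key y x hy hx
  · simp only [momaux_ext]
    rw [dif_neg hx, dif_neg hy, dist_self]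
    exact dist_nonneg

private abbrev momaux_S (a b : ℝ) :=
  {f : ℝ → ℝ // LipschitzWith 1 f ∧ ∀ x ∉ Set.Icc a b, f x = 0}

section
variable {a b : ℝ}

/-- restriction map into C(Icc a b, ℝ) -/
private noncomputable def momaux_Phi (f : momaux_S a b) : C(Set.Icc a b, ℝ) :=
  ⟨fun x => f.1 x, f.2.1.continuous.comp continuous_subtype_val⟩

private lemma momaux_isCompact_range (hab : a ≤ b) :
    IsCompact (Set.range (momaux_Phi (a := a) (b := b))) := by
  apply ArzelaAscoli.isCompact_of_equicontinuous
  · -- pointwise image compact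
    set T : Set (Set.Icc a b → ℝ) :=
      {g | (∀ x y, dist (g x) (g y) ≤ dist x y) ∧
        ∀ x : Set.Icc a b, |g x| ≤ min (x.1 - a) (b - x.1)} with hT
    have hEq : ContinuousMap.toFun '' Set.range (momaux_Phi (a := a) (b := b)) = T := by
      apply Set.Subset.antisymm
      · rintro g ⟨q, ⟨f, rfl⟩, rfl⟩
        refine ⟨fun x y => ?_, fun x => ?_⟩
        · have := f.2.1.dist_le_mul x.1 y.1
          rw [NNReal.coe_one, one_mul] at this
          simpa [momaux_Phi, Subtype.dist_eq] using this
        · exact momaux_bound f.2.1 f.2.2 x.2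
      · rintro g ⟨hg, hbd⟩
        refine ⟨momaux_Phi ⟨momaux_ext g, momaux_ext_lip hg hbd,
          fun x hx => by simp only [momaux_ext]; rw [dif_neg hx]⟩, ⟨_, rfl⟩, ?_⟩
        funext x
        simp [momaux_Phi, momaux_ext, dif_pos x.2]
    rw [hEq]
    have hsub : T ⊆ Set.pi Set.univ (fun _ : Set.Icc a b => Set.Icc (-(b - a)) (b - a)) := by
      rintro g ⟨_, hbd⟩ x _
      have h1 := (hbd x).trans (min_le_left _ _)
      have h2 : x.1 - a ≤ b - a := by have := x.2.2; linarith
      have := abs_le.mp (h1.trans h2)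
      exact ⟨this.1, this.2⟩
    have hcl : IsClosed T := by
      have hrw : T = (⋂ (x : Set.Icc a b) (y : Set.Icc a b),
            {g : Set.Icc a b → ℝ | dist (g x) (g y) ≤ dist x y}) ∩
          ⋂ (x : Set.Icc a b), {g : Set.Icc a b → ℝ | |g x| ≤ min (x.1 - a) (b - x.1)} := by
        ext g
        constructor
        · rintro ⟨h1, h2⟩
          exact ⟨Set.mem_iInter.mpr fun x => Set.mem_iInter.mpr fun y => h1 x y,
            Set.mem_iInter.mpr h2⟩
        · rintro ⟨h1, h2⟩
          exact ⟨fun x y => Set.mem_iInter.mp (Set.mem_iInter.mp h1 x) y,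
            fun x => Set.mem_iInter.mp h2 x⟩
      rw [hrw]
      apply IsClosed.inter
      · refine isClosed_iInter fun x => isClosed_iInter fun y => ?_
        exact isClosed_le (((continuous_apply x).dist (continuous_apply y))) continuous_const
      · refine isClosed_iInter fun x => ?_
        exact isClosed_le ((continuous_apply x).abs) continuous_const
    exact (isCompact_univ_pi fun _ => isCompact_Icc).of_isClosed_subset hcl hsub
  · -- equicontinuity
    apply Metric.equicontinuous_of_continuity_modulus (fun t => t) tendsto_id
    rintro x y ⟨q, f, rfl⟩
    have := f.2.1.dist_le_mul x.1 y.1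
    rw [NNReal.coe_one, one_mul] at this
    simpa [momaux_Phi, Subtype.dist_eq] using this

end

section
variable {a b : ℝ}

private lemma momaux_nhds_eq (f : momaux_S a b) :
    Filter.comap (fun g : momaux_S a b => UniformFun.ofFun g.1)
        (𝓝 (UniformFun.ofFun f.1)) =
      Filter.comap (momaux_Phi (a := a) (b := b)) (𝓝 (momaux_Phi f)) := by
  have hL : (Filter.comap (fun g : momaux_S a b => UniformFun.ofFun g.1)
      (𝓝 (UniformFun.ofFun f.1))).HasBasis (fun ε : ℝ => 0 < ε)
      (fun ε => {g : momaux_S a b | ∀ x : ℝ, dist (f.1 x) (g.1 x) < ε}) := by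
    have := (UniformFun.hasBasis_nhds_of_basis ℝ ℝ (UniformFun.ofFun f.1)
      Metric.uniformity_basis_dist).comap (fun g : momaux_S a b => UniformFun.ofFun g.1)
    exact this
  have hR : (Filter.comap (momaux_Phi (a := a) (b := b)) (𝓝 (momaux_Phi f))).HasBasis
      (fun ε : ℝ => 0 < ε)
      (fun ε => {g : momaux_S a b | dist (momaux_Phi g) (momaux_Phi f) < ε}) := by
    exact Metric.nhds_basis_ball.comap _
  refine hL.ext hR ?_ ?_
  · intro ε hε
    refine ⟨ε, hε, fun g hg x => ?_⟩
    by_cases hx : x ∈ Set.Icc a b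
    · have h1 : dist (f.1 x) (g.1 x) = dist (momaux_Phi f ⟨x, hx⟩) (momaux_Phi g ⟨x, hx⟩) := rfl
      rw [h1]
      calc dist (momaux_Phi f ⟨x, hx⟩) (momaux_Phi g ⟨x, hx⟩)
          ≤ dist (momaux_Phi f) (momaux_Phi g) := ContinuousMap.dist_apply_le_dist _
        _ = dist (momaux_Phi g) (momaux_Phi f) := dist_comm _ _
        _ < ε := hg
    · rw [f.2.2 x hx, g.2.2 x hx, dist_self]; exact hε
  · intro ε hε
    refine ⟨ε / 2, half_pos hε, fun g hg => ?_⟩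
    have : dist (momaux_Phi g) (momaux_Phi f) ≤ ε / 2 := by
      rw [ContinuousMap.dist_le (half_pos hε).le]
      intro x
      have := hg x.1
      rw [dist_comm] at this
      exact this.le
    exact lt_of_le_of_lt this (half_lt_self hε)

/-- topologies: uniform-induced equals Φ-induced -/
private lemma momaux_topology_eq :
    (TopologicalSpace.induced
        (fun f : momaux_S a b => UniformFun.ofFun f.1)
        (inferInstance : TopologicalSpace (UniformFun ℝ ℝ))) =
      TopologicalSpace.induced (momaux_Phi (a := a) (b := b)) inferInstance := by
  apply TopologicalSpace.ext_nhds
  intro f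
  rw [nhds_induced, nhds_induced]
  exact momaux_nhds_eq f

private lemma momaux_compactSpace :
    @CompactSpace (momaux_S a b)
      (TopologicalSpace.induced (fun f : momaux_S a b => UniformFun.ofFun f.1)
        (inferInstance : TopologicalSpace (UniformFun ℝ ℝ))) := by
  letI : TopologicalSpace (momaux_S a b) :=
    TopologicalSpace.induced (fun f : momaux_S a b => UniformFun.ofFun f.1) inferInstance
  have hind : Topology.IsInducing (momaux_Phi (a := a) (b := b)) := ⟨momaux_topology_eq⟩
  rcases le_or_gt a b with hab | hab
  · rw [← isCompact_univ_iff, hind.isCompact_iff, Set.image_univ]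
    exact momaux_isCompact_range hab
  · -- b < a : subsingleton
    have : Subsingleton (momaux_S a b) := by
      constructor
      rintro ⟨f, hf⟩ ⟨g, hg⟩
      have h1 := momaux_zero_of_le hab.le hf.1 hf.2
      have h2 := momaux_zero_of_le hab.le hg.1 hg.2
      exact Subtype.ext (h1.trans h2.symm)
    exact Finite.compactSpace
end
section
variable {a b : ℝ}

private noncomputable def momaux_J (hab : a ≤ b) (w : ℝ → ℝ) (q : C(Set.Icc a b, ℝ)) : ℝ :=
  ∫ x in a..b, Set.IccExtend hab (⇑q) x * w x

private lemma momaux_J_cont (hab : a ≤ b) {w : ℝ → ℝ} (hw : Continuous w) :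
    Continuous (momaux_J hab w) := by
  obtain ⟨C, hC⟩ : ∃ C, ∀ x ∈ Set.Icc a b, ‖w x‖ ≤ C :=
    isCompact_Icc.exists_bound_of_continuousOn hw.continuousOn
  have hC0 : 0 ≤ C := le_trans (norm_nonneg _) (hC a ⟨le_refl a, hab⟩)
  refine LipschitzWith.continuous (K := Real.toNNReal (C * (b - a))) ?_
  refine LipschitzWith.of_dist_le_mul fun q1 q2 => ?_
  have hint : ∀ q : C(Set.Icc a b, ℝ),
      IntervalIntegrable (fun x => Set.IccExtend hab (⇑q) x * w x) MeasureTheory.volume a b :=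
    fun q => ((q.continuous.Icc_extend' ).mul hw).intervalIntegrable _ _
  rw [Real.dist_eq, momaux_J, momaux_J, ← intervalIntegral.integral_sub (hint q1) (hint q2)]
  have hbound : ∀ x ∈ Set.uIoc a b,
      ‖Set.IccExtend hab (⇑q1) x * w x - Set.IccExtend hab (⇑q2) x * w x‖
        ≤ dist q1 q2 * C := by
    intro x hx
    have hx' : x ∈ Set.Icc a b := by
      rw [Set.uIoc_of_le hab] at hx
      exact ⟨hx.1.le, hx.2⟩
    have h1 : Set.IccExtend hab (⇑q1) x * w x - Set.IccExtend hab (⇑q2) x * w x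
        = (q1 (Set.projIcc a b hab x) - q2 (Set.projIcc a b hab x)) * w x := by
      simp [Set.IccExtend]; ring
    rw [h1, norm_mul]
    have h2 : ‖q1 (Set.projIcc a b hab x) - q2 (Set.projIcc a b hab x)‖ ≤ dist q1 q2 := by
      rw [Real.norm_eq_abs, ← Real.dist_eq]
      exact ContinuousMap.dist_apply_le_dist _
    exact mul_le_mul h2 (hC x hx') (norm_nonneg _) dist_nonneg
  have := intervalIntegral.norm_integral_le_of_norm_le_const hbound
  rw [Real.norm_eq_abs] at this
  refine this.trans ?_
  have habs : |b - a| = b - a := abs_of_nonneg (by linarith)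
  rw [habs]
  have h3 : C * (b - a) ≤ (Real.toNNReal (C * (b - a)) : ℝ) := Real.le_coe_toNNReal _
  calc dist q1 q2 * C * (b - a) = C * (b - a) * dist q1 q2 := by ring
    _ ≤ (Real.toNNReal (C * (b - a)) : ℝ) * dist q1 q2 :=
        mul_le_mul_of_nonneg_right h3 dist_nonneg

private lemma momaux_moment_eq (hab : a ≤ b) (f : momaux_S a b) (k : ℕ) :
    (∫ x in a..b, f.1 x * x ^ k) = momaux_J hab (fun x => x ^ k) (momaux_Phi f) := by
  refine intervalIntegral.integral_congr fun x hx => ?_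
  rw [Set.uIcc_of_le hab] at hx
  show f.1 x * x ^ k = Set.IccExtend hab _ x * x ^ k
  rw [Set.IccExtend_of_mem hab _ hx]
  rfl

private lemma momaux_inj (hab : a < b) : Function.Injective
    (fun f : momaux_S a b => fun k : ℕ => ∫ x in a..b, f.1 x * x ^ k) := by
  intro f g hfg
  have hfg' : ∀ k : ℕ, (∫ x in a..b, f.1 x * x ^ k) = ∫ x in a..b, g.1 x * x ^ k :=
    fun k => congrFun hfg k
  set h : ℝ → ℝ := fun x => f.1 x - g.1 x with hh
  have hhc : Continuous h := f.2.1.continuous.sub g.2.1.continuous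
  have hmom : ∀ k : ℕ, (∫ x in a..b, h x * x ^ k) = 0 := by
    intro k
    have h1 : IntervalIntegrable (fun x => f.1 x * x ^ k) MeasureTheory.volume a b :=
      (f.2.1.continuous.mul (continuous_pow k)).intervalIntegrable _ _
    have h2 : IntervalIntegrable (fun x => g.1 x * x ^ k) MeasureTheory.volume a b :=
      (g.2.1.continuous.mul (continuous_pow k)).intervalIntegrable _ _
    have : (fun x => h x * x ^ k) = fun x => f.1 x * x ^ k - g.1 x * x ^ k := by
      funext x; rw [hh]; ring
    rw [this, intervalIntegral.integral_sub h1 h2, hfg' k, sub_self]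
  have hpoly : ∀ p : Polynomial ℝ, (∫ x in a..b, h x * p.eval x) = 0 := by
    intro p
    have hrw : (fun x => h x * p.eval x)
        = fun x => ∑ i ∈ Finset.range (p.natDegree + 1), p.coeff i * (h x * x ^ i) := by
      funext x
      rw [Polynomial.eval_eq_sum_range, Finset.mul_sum]
      exact Finset.sum_congr rfl fun i _ => by ring
    rw [hrw, intervalIntegral.integral_finset_sum (f := fun i x => p.coeff i * (h x * x ^ i)) (fun i _ =>
      (continuous_const.mul (hhc.mul (continuous_pow i))).intervalIntegrable _ _)]
    have : ∀ i ∈ Finset.range (p.natDegree + 1),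
        (∫ x in a..b, p.coeff i * (h x * x ^ i)) = 0 := by
      intro i _
      rw [intervalIntegral.integral_const_mul, hmom i, mul_zero]
    exact Finset.sum_eq_zero this
  have hzero : ∀ q : C(Set.Icc a b, ℝ), momaux_J hab.le h q = 0 := by
    have hclosed : IsClosed {q : C(Set.Icc a b, ℝ) | momaux_J hab.le h q = 0} :=
      isClosed_singleton.preimage (momaux_J_cont hab.le hhc)
    have hsub : (polynomialFunctions (Set.Icc a b) : Set C(Set.Icc a b, ℝ))
        ⊆ {q | momaux_J hab.le h q = 0} := by
      intro q hq
      rw [polynomialFunctions_coe] at hq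
      obtain ⟨p, rfl⟩ := hq
      show momaux_J hab.le h (Polynomial.toContinuousMapOnAlgHom _ p) = 0
      have : momaux_J hab.le h (Polynomial.toContinuousMapOnAlgHom _ p)
          = ∫ x in a..b, h x * p.eval x := by
        rw [momaux_J]
        refine intervalIntegral.integral_congr fun x hx => ?_
        rw [Set.uIcc_of_le hab.le] at hx
        rw [Set.IccExtend_of_mem hab.le _ hx]
        show p.eval x * h x = h x * p.eval x
        ring
      rw [this, hpoly p]
    have hclosure := closure_minimal hsub hclosed
    have htop : closure (polynomialFunctions (Set.Icc a b) : Set C(Set.Icc a b, ℝ))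
        = Set.univ := by
      have := polynomialFunctions_closure_eq_top a b
      rw [← Subalgebra.topologicalClosure_coe, this]
      rfl
    rw [htop] at hclosure
    exact fun q => hclosure (Set.mem_univ q)
  have hsq : (∫ x in a..b, h x * h x) = 0 := by
    have := hzero ⟨fun x => h x.1, hhc.comp continuous_subtype_val⟩
    rw [momaux_J] at this
    rw [← this]
    refine intervalIntegral.integral_congr fun x hx => ?_
    rw [Set.uIcc_of_le hab.le] at hx
    rw [Set.IccExtend_of_mem hab.le _ hx]
    rfl
  have hK : ∀ x ∈ Set.Icc a b, h x = 0 := by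
    by_contra hcon
    push_neg at hcon
    obtain ⟨x0, hx0, hx0ne⟩ := hcon
    have hpos : 0 < ∫ x in a..b, h x * h x :=
      intervalIntegral.integral_pos hab ((hhc.mul hhc).continuousOn)
        (fun x _ => mul_self_nonneg _) ⟨x0, hx0, mul_self_pos.mpr hx0ne⟩
    rw [hsq] at hpos
    exact lt_irrefl 0 hpos
  refine Subtype.ext (funext fun x => ?_)
  by_cases hx : x ∈ Set.Icc a b
  · have := hK x hx
    rw [hh] at this
    simpa [sub_eq_zero] using this
  · rw [f.2.2 x hx, g.2.2 x hx]
end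

private lemma momaux_subsingleton_top {X : Type*} [Subsingleton X]
    (t1 t2 : TopologicalSpace X) : t1 = t2 := by
  refine TopologicalSpace.ext_nhds fun x => ?_
  have huniv : ∀ s : Set X, x ∈ s → s = Set.univ := fun s hx =>
    Set.eq_univ_of_forall fun y => (Subsingleton.elim x y) ▸ hx
  have key : ∀ t : TopologicalSpace X, @nhds X t x = pure x := by
    intro t
    refine le_antisymm (fun s hs => ?_) (@pure_le_nhds X t x)
    rw [Filter.mem_pure] at hs
    rw [huniv s hs]
    exact Filter.univ_mem
  rw [key t1, key t2]

private lemma momaux_main (a b : ℝ) :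
    (TopologicalSpace.induced
        (fun f : momaux_S a b => fun k : ℕ => ∫ x in a..b, f.1 x * x ^ k)
        (inferInstance : TopologicalSpace (ℕ → ℝ)))
      = TopologicalSpace.induced
        (fun f : momaux_S a b => UniformFun.ofFun f.1)
        (inferInstance : TopologicalSpace (UniformFun ℝ ℝ)) := by
  rcases le_or_gt b a with hba | hab
  · haveI : Subsingleton (momaux_S a b) := by
      constructor
      rintro ⟨f, hf⟩ ⟨g, hg⟩
      exact Subtype.ext ((momaux_zero_of_le hba hf.1 hf.2).trans
        (momaux_zero_of_le hba hg.1 hg.2).symm)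
    exact momaux_subsingleton_top _ _
  · letI tu : TopologicalSpace (momaux_S a b) :=
      TopologicalSpace.induced (fun f : momaux_S a b => UniformFun.ofFun f.1) inferInstance
    have hphi : Continuous (momaux_Phi (a := a) (b := b)) :=
      continuous_iff_le_induced.mpr (le_of_eq momaux_topology_eq)
    have hm_cont : Continuous
        (fun f : momaux_S a b => fun k : ℕ => ∫ x in a..b, f.1 x * x ^ k) := by
      refine continuous_pi fun k => ?_
      have hrw : (fun f : momaux_S a b => ∫ x in a..b, f.1 x * x ^ k)
          = (momaux_J hab.le (fun x => x ^ k)) ∘ (momaux_Phi (a := a) (b := b)) :=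
        funext fun f => momaux_moment_eq hab.le f k
      rw [hrw]
      exact (momaux_J_cont hab.le (continuous_pow k)).comp hphi
    have h1 : tu ≤ TopologicalSpace.induced
        (fun f : momaux_S a b => fun k : ℕ => ∫ x in a..b, f.1 x * x ^ k)
        inferInstance := continuous_iff_le_induced.mp hm_cont
    haveI hcs : @CompactSpace (momaux_S a b) tu := momaux_compactSpace
    haveI hT2 : @T2Space (momaux_S a b)
        (TopologicalSpace.induced
          (fun f : momaux_S a b => fun k : ℕ => ∫ x in a..b, f.1 x * x ^ k)
          (inferInstance : TopologicalSpace (ℕ → ℝ))) :=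
      @Topology.IsEmbedding.t2Space _ _
        (TopologicalSpace.induced
          (fun f : momaux_S a b => fun k : ℕ => ∫ x in a..b, f.1 x * x ^ k)
          (inferInstance : TopologicalSpace (ℕ → ℝ))) _ _
        (fun f : momaux_S a b => fun k : ℕ => ∫ x in a..b, f.1 x * x ^ k)
        (@Topology.IsEmbedding.mk _ _
          (TopologicalSpace.induced
            (fun f : momaux_S a b => fun k : ℕ => ∫ x in a..b, f.1 x * x ^ k)
            (inferInstance : TopologicalSpace (ℕ → ℝ))) _ _
          (@Topology.IsInducing.mk _ _
            (TopologicalSpace.induced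
              (fun f : momaux_S a b => fun k : ℕ => ∫ x in a..b, f.1 x * x ^ k)
              (inferInstance : TopologicalSpace (ℕ → ℝ))) _ _ rfl)
          (momaux_inj hab))
    have hcont_id : @Continuous _ _ tu
        (TopologicalSpace.induced
          (fun f : momaux_S a b => fun k : ℕ => ∫ x in a..b, f.1 x * x ^ k)
          (inferInstance : TopologicalSpace (ℕ → ℝ))) id := continuous_id_iff_le.mpr h1
    let E := @Continuous.homeoOfEquivCompactToT2 _ _ tu
        (TopologicalSpace.induced
          (fun f : momaux_S a b => fun k : ℕ => ∫ x in a..b, f.1 x * x ^ k)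
          (inferInstance : TopologicalSpace (ℕ → ℝ))) hcs hT2 (Equiv.refl _) hcont_id
    have h2 : TopologicalSpace.induced
        (fun f : momaux_S a b => fun k : ℕ => ∫ x in a..b, f.1 x * x ^ k)
        (inferInstance : TopologicalSpace (ℕ → ℝ)) ≤ tu :=
      continuous_id_iff_le.mp (@Homeomorph.continuous_symm _ _ tu
        (TopologicalSpace.induced
          (fun f : momaux_S a b => fun k : ℕ => ∫ x in a..b, f.1 x * x ^ k)
          (inferInstance : TopologicalSpace (ℕ → ℝ))) E)
    exact le_antisymm h2 h1

/-- On the space `F([a,b])` of real-valued `1`-Lipschitz functions supported on `[a,b]`, the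
weak topology defined by the moment functionals `f ↦ ∫_a^b f(x)xᵏ dx`, `k = 0,1,2,…`, coincides
with the topology of uniform convergence; in particular, convergence of all moments implies
uniform convergence on `[a,b]`. -/
theorem moment_topology_eq_uniform_topology (a b : ℝ) :
    (TopologicalSpace.induced
        (fun f : {f : ℝ → ℝ // LipschitzWith 1 f ∧ ∀ x ∉ Set.Icc a b, f x = 0} =>
          fun k : ℕ => ∫ x in a..b, f.1 x * x ^ k)
        (inferInstance : TopologicalSpace (ℕ → ℝ))
      = TopologicalSpace.induced
        (fun f : {f : ℝ → ℝ // LipschitzWith 1 f ∧ ∀ x ∉ Set.Icc a b, f x = 0} =>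
          UniformFun.ofFun f.1)
        (inferInstance : TopologicalSpace (UniformFun ℝ ℝ))) ∧
    (∀ (F : ℕ → ℝ → ℝ) (f : ℝ → ℝ),
      (∀ n, LipschitzWith 1 (F n)) → (∀ n, ∀ x ∉ Set.Icc a b, F n x = 0) →
      LipschitzWith 1 f → (∀ x ∉ Set.Icc a b, f x = 0) →
      (∀ k : ℕ, Filter.Tendsto (fun n => ∫ x in a..b, F n x * x ^ k)
        Filter.atTop (nhds (∫ x in a..b, f x * x ^ k))) →
      TendstoUniformlyOn F f Filter.atTop (Set.Icc a b)) := by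
  refine ⟨momaux_main a b, ?_⟩
  intro F f hFlip hF0 hflip hf0 hmom
  set F' : ℕ → momaux_S a b := fun n => ⟨F n, hFlip n, hF0 n⟩ with hF'
  set f' : momaux_S a b := ⟨f, hflip, hf0⟩ with hf'
  have h1 : Filter.Tendsto F' Filter.atTop
      (@nhds _ (TopologicalSpace.induced
        (fun g : momaux_S a b => fun k : ℕ => ∫ x in a..b, g.1 x * x ^ k)
        (inferInstance : TopologicalSpace (ℕ → ℝ))) f') := by
    rw [nhds_induced, Filter.tendsto_comap_iff, tendsto_pi_nhds]
    exact fun k => hmom k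
  rw [momaux_main a b] at h1
  rw [nhds_induced, Filter.tendsto_comap_iff] at h1
  have h3 := UniformFun.tendsto_iff_tendstoUniformly.mp h1
  exact TendstoUniformly.tendstoUniformlyOn h3
end
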